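/- arXiv:1104.0595 — 9 statements merged into one kernel-verified Lean document; each statement's English description precedes it below -/
import Mathlib

section
/- Let F = GF(q) with q an odd prime power and n ≥ 2. The function f : F^n → F defined by f(x_1,...,x_n) = ∏_{i=1}^n (x_i^{q−1} − 1/2) cannot be written as a finite sum of functions each of which depends on at most n−1 of the variables. That is, there do not exist functions g_1,...,g_m : F^n → F, each having at least one inessential variable, with f = g_1 + ⋯ + g_m. -/
/-- For `F = GF(q)` with `q` odd and `n ≥ 2`, the function
`f(x) = ∏ (x_i^{q-1} - 1/2)` is not a finite sum of functions each having at least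
one inessential variable. -/
theorem not_sum_of_lower_arity
    (F : Type*) [Field F] [Fintype F] (q n : ℕ) (hq : Fintype.card F = q)
    (hodd : Odd q) (hn : 2 ≤ n) :
    ¬ ∃ (m : ℕ) (g : Fin m → ((Fin n → F) → F)),
      (∀ k : Fin m, ∃ i : Fin n, ∀ (x : Fin n → F) (a : F),
        g k (Function.update x i a) = g k x) ∧
      (∀ x : Fin n → F, (∏ i : Fin n, ((x i) ^ (q - 1) - (2 : F)⁻¹)) = ∑ k : Fin m, g k x) := by
  classical
  rintro ⟨m, g, hess, hsum⟩
  set D : ((Fin n → F) → F) → F := fun h =>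
    ∑ s : Fin n → Bool, (∏ j, (if s j then (-1:F) else 1)) *
      h (fun j => if s j then 1 else 0) with hD
  have hq2 : 2 ≤ q := hq ▸ Fintype.one_lt_card
  -- D of a function with an inessential variable is 0
  have hDg : ∀ k, D (g k) = 0 := by
    intro k
    obtain ⟨i, hi⟩ := hess k
    rw [hD]
    refine Finset.sum_involution (fun s _ => Function.update s i (!s i)) ?_ ?_ ?_ ?_
    · intro s _
      have hx : (fun j => if Function.update s i (!s i) j then (1:F) else 0)
          = Function.update (fun j => if s j then (1:F) else 0) i
            (if !s i then 1 else 0) := by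
        funext j
        by_cases hj : j = i
        · subst hj; simp
        · simp [Function.update_of_ne hj]
      have hg : g k (fun j => if Function.update s i (!s i) j then (1:F) else 0)
          = g k (fun j => if s j then (1:F) else 0) := by
        rw [hx, hi]
      have key : ∀ b : Bool, (∏ j, (if Function.update s i b j then (-1:F) else 1))
          = (if b then (-1:F) else 1) * ∏ j ∈ Finset.univ.erase i,
              (if s j then (-1:F) else 1) := by
        intro b
        have hfun : (fun j => if Function.update s i b j then (-1:F) else 1)
            = Function.update (fun j => if s j then (-1:F) else 1) i
              (if b then (-1:F) else 1) := by
          funext j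
          by_cases hj : j = i
          · subst hj; simp
          · simp [Function.update_of_ne hj]
        rw [hfun, Finset.prod_update_of_mem (Finset.mem_univ i)]
        rw [Finset.sdiff_singleton_eq_erase]
      have h1 : (∏ j, (if s j then (-1:F) else 1))
          = (if s i then (-1:F) else 1) * ∏ j ∈ Finset.univ.erase i,
              (if s j then (-1:F) else 1) := by
        have := key (s i)
        rwa [Function.update_eq_self] at this
      rw [hg, key (!s i), h1]
      cases s i <;> simp <;> ring
    · intro s _ _ hcon
      have := congrFun hcon i
      simp at this
    · intro s _; exact Finset.mem_univ _
    · intro s _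
      funext j
      by_cases hj : j = i
      · subst hj; simp
      · simp [Function.update_of_ne hj]
  -- D of f is (-1)^n
  have hDf : D (fun x => ∏ i, (x i ^ (q - 1) - (2:F)⁻¹)) = (-1 : F) ^ n := by
    rw [hD]
    have hstep : ∀ s : Fin n → Bool,
        (∏ j, (if s j then (-1:F) else 1)) *
          (∏ i, ((if s i then (1:F) else 0) ^ (q - 1) - (2:F)⁻¹))
        = ∏ j, (if s j then -(1 - (2:F)⁻¹) else -(2:F)⁻¹) := by
      intro s
      rw [← Finset.prod_mul_distrib]
      refine Finset.prod_congr rfl fun j _ => ?_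
      cases hsj : s j <;>
        simp [zero_pow (Nat.sub_ne_zero_of_lt hq2), one_pow] <;> ring
    calc (∑ s : Fin n → Bool, (∏ j, (if s j then (-1:F) else 1)) *
            (∏ i, ((if s i then (1:F) else 0) ^ (q - 1) - (2:F)⁻¹)))
        = ∑ s : Fin n → Bool, ∏ j, (if s j then -(1 - (2:F)⁻¹) else -(2:F)⁻¹) := by
          exact Finset.sum_congr rfl fun s _ => hstep s
      _ = ∏ j : Fin n, ∑ b : Bool, (if b then -(1 - (2:F)⁻¹) else -(2:F)⁻¹) := by
          rw [Fintype.prod_sum]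
      _ = (-1 : F) ^ n := by
          simp only [Fintype.sum_bool, Finset.prod_const, Finset.card_univ,
            Fintype.card_fin]
          congr 1
          norm_num
          ring
  -- combine
  have hzero : D (fun x => ∏ i, (x i ^ (q - 1) - (2:F)⁻¹)) = 0 := by
    rw [hD]
    calc (∑ s : Fin n → Bool, (∏ j, (if s j then (-1:F) else 1)) *
            (∏ i, ((if s i then (1:F) else 0) ^ (q - 1) - (2:F)⁻¹)))
        = ∑ s : Fin n → Bool, ∑ k, (∏ j, (if s j then (-1:F) else 1)) *
            g k (fun j => if s j then 1 else 0) := by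
          refine Finset.sum_congr rfl fun s _ => ?_
          rw [hsum, Finset.mul_sum]
      _ = ∑ k, D (g k) := by rw [Finset.sum_comm]
      _ = 0 := by simp [hDg]
  rw [hDf] at hzero
  exact pow_ne_zero n (neg_ne_zero.mpr one_ne_zero) hzero
end

section
/- Let F be a field of characteristic 0, n ≥ 3, and f ∈ F[x_1,...,x_n]. Suppose that the restriction of the induced function of f to the set F^n_= = {(a_1,...,a_n) : a_i = a_j for some i ≠ j} is determined by oddsupp, i.e., f(a) = f(b) whenever a, b ∈ F^n_= and oddsupp(a) = oddsupp(b). Then f restricted to F^n_= is constant. -/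
open MvPolynomial

section Aux

variable {F : Type*} [Field F] [CharZero F] {n : ℕ}

/-- Composition: evaluating an `aeval` into `Polynomial F` at a point. -/
private lemma eval_aeval_comp (σg : Fin n → Polynomial F) (f : MvPolynomial (Fin n) F) (t : F) :
    (aeval σg f).eval t = eval (fun m => (σg m).eval t) f := by
  induction f using MvPolynomial.induction_on with
  | C a => simp
  | add p q hp hq => simp [hp, hq]
  | mul_X p m hp => simp [hp]

/-- Chain rule for `aeval` into `Polynomial F`. -/
private lemma deriv_aeval (σg : Fin n → Polynomial F) (f : MvPolynomial (Fin n) F) :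
    Polynomial.derivative (aeval σg f)
      = ∑ m : Fin n, aeval σg (pderiv m f) * Polynomial.derivative (σg m) := by
  induction f using MvPolynomial.induction_on with
  | C a => simp
  | add p q hp hq =>
      simp only [map_add, Polynomial.derivative_add, hp, hq, add_mul,
        Finset.sum_add_distrib]
  | mul_X p m hp =>
      have hterm : ∀ kk : Fin n,
          aeval σg (pderiv kk (p * X m)) * Polynomial.derivative (σg kk)
            = aeval σg (pderiv kk p) * Polynomial.derivative (σg kk) * σg m
              + (if kk = m then aeval σg p * Polynomial.derivative (σg m) else 0) := by
        intro kk
        rw [pderiv_mul, map_add, map_mul, map_mul, aeval_X, add_mul]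
        congr 1
        · ring
        · rw [pderiv_X]
          by_cases h : kk = m
          · subst h
            simp [Pi.single_eq_same]
          · rw [Pi.single_eq_of_ne (Ne.symm h)]
            simp [h]
      rw [map_mul, aeval_X, Polynomial.derivative_mul, hp, Finset.sum_mul]
      rw [Finset.sum_congr rfl (fun kk _ => hterm kk), Finset.sum_add_distrib,
        Finset.sum_ite_eq' Finset.univ m
          (fun _ => aeval σg p * Polynomial.derivative (σg m))]
      simp [add_comm]

variable [DecidableEq F]

private def odspPt (c : Fin n → F) (T : Finset (Fin n)) (t : F) : Fin n → F :=
  fun m => if m ∈ T then t else c m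

private noncomputable def odspSub (c : Fin n → F) (T : Finset (Fin n)) : Fin n → Polynomial F :=
  fun m => if m ∈ T then Polynomial.X else Polynomial.C (c m)

private lemma odspEval (c : Fin n → F) (T : Finset (Fin n)) (g : MvPolynomial (Fin n) F)
    (t : F) : (aeval (odspSub c T) g).eval t = eval (odspPt c T t) g := by
  rw [eval_aeval_comp]
  have hfun : (fun m => (odspSub c T m).eval t) = odspPt c T t := by
    funext m
    by_cases h : m ∈ T <;> simp [odspSub, odspPt, h]
  rw [hfun]

private lemma odspDeriv (c : Fin n → F) (T : Finset (Fin n)) (g : MvPolynomial (Fin n) F)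
    (t : F) : (Polynomial.derivative (aeval (odspSub c T) g)).eval t
      = ∑ m ∈ T, eval (odspPt c T t) (pderiv m g) := by
  rw [deriv_aeval, Polynomial.eval_finset_sum]
  have hterm : ∀ m : Fin n,
      (aeval (odspSub c T) (pderiv m g) * Polynomial.derivative (odspSub c T m)).eval t
        = if m ∈ T then eval (odspPt c T t) (pderiv m g) else 0 := by
    intro m
    by_cases h : m ∈ T
    · simp [odspSub, h, Polynomial.eval_mul, odspEval c T (pderiv m g) t]
    · simp [odspSub, h]
  rw [Finset.sum_congr rfl (fun m _ => hterm m), Finset.sum_ite_mem, Finset.univ_inter]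

private lemma odsp_const_of (c : Fin n → F) (T : Finset (Fin n)) (g : MvPolynomial (Fin n) F)
    (h : ∀ t : F, ∑ m ∈ T, eval (odspPt c T t) (pderiv m g) = 0) :
    ∀ t t' : F, eval (odspPt c T t) g = eval (odspPt c T t') g := by
  have hd : Polynomial.derivative (aeval (odspSub c T) g) = 0 :=
    Polynomial.funext (fun r => by rw [odspDeriv, h r, Polynomial.eval_zero])
  have hC := Polynomial.eq_C_of_derivative_eq_zero hd
  intro t t'
  rw [← odspEval, ← odspEval, hC, Polynomial.eval_C, Polynomial.eval_C]

private lemma odsp_deriv_zero_of_const (c : Fin n → F) (T : Finset (Fin n))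
    (g : MvPolynomial (Fin n) F)
    (h : ∀ t t' : F, eval (odspPt c T t) g = eval (odspPt c T t') g) :
    ∀ t : F, ∑ m ∈ T, eval (odspPt c T t) (pderiv m g) = 0 := by
  have hc : aeval (odspSub c T) g = Polynomial.C (eval (odspPt c T 0) g) :=
    Polynomial.funext (fun r => by rw [odspEval, Polynomial.eval_C]; exact h r 0)
  intro t
  rw [← odspDeriv, hc, Polynomial.derivative_C, Polynomial.eval_zero]

/-- Parity of value-counts is unchanged when only a "doubled" pair of coordinates changes. -/
private lemma parity_aux [DecidableEq F] (w w' : Fin n → F) (i j : Fin n) (hij : i ≠ j)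
    (hw : w i = w j) (hw' : w' i = w' j)
    (hagree : ∀ k, k ≠ i → k ≠ j → w k = w' k) :
    ∀ c : F, (Finset.univ.filter (fun k => w k = c)).card % 2
           = (Finset.univ.filter (fun k => w' k = c)).card % 2 := by
  intro c
  have key : ∀ v : Fin n → F,
      (Finset.univ.filter (fun k => v k = c)).card
        = (({i, j} : Finset (Fin n)).filter (fun k => v k = c)).card
          + ((({i, j} : Finset (Fin n))ᶜ).filter (fun k => v k = c)).card := by
    intro v
    rw [← Finset.card_union_of_disjoint
      (Finset.disjoint_filter_filter disjoint_compl_right),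
      ← Finset.filter_union, Finset.union_compl]
  have hrest : (({i, j} : Finset (Fin n))ᶜ).filter (fun k => w k = c)
      = (({i, j} : Finset (Fin n))ᶜ).filter (fun k => w' k = c) := by
    apply Finset.filter_congr
    intro k hk
    simp only [Finset.mem_compl, Finset.mem_insert, Finset.mem_singleton, not_or] at hk
    rw [hagree k hk.1 hk.2]
  have hpair : ∀ v : Fin n → F, v i = v j →
      (({i, j} : Finset (Fin n)).filter (fun k => v k = c)).card % 2 = 0 := by
    intro v hv
    by_cases h : v i = c
    · have hfull : ({i, j} : Finset (Fin n)).filter (fun k => v k = c) = {i, j} := by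
        apply Finset.filter_true_of_mem
        intro k hk
        rcases Finset.mem_insert.1 hk with rfl | hk
        · exact h
        · rw [Finset.mem_singleton] at hk; subst hk; rw [← hv]; exact h
      rw [hfull, Finset.card_insert_of_notMem (by simp [hij]), Finset.card_singleton]
    · have hnone : ({i, j} : Finset (Fin n)).filter (fun k => v k = c) = ∅ := by
        apply Finset.filter_false_of_mem
        intro k hk
        rcases Finset.mem_insert.1 hk with rfl | hk
        · exact h
        · rw [Finset.mem_singleton] at hk; subst hk; rw [← hv]; exact h
      simp [hnone]
  have h1 := hpair w hw
  have h2 := hpair w' hw'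
  rw [key w, key w', hrest]
  omega

end Aux

/-- Over a field of characteristic 0, if the restriction of a polynomial
function to the set of tuples with a repeated coordinate is determined by `oddsupp`,
then that restriction is constant. -/
theorem constant_on_diagonal_of_oddsupp
    (F : Type*) [Field F] [CharZero F] [DecidableEq F] (n : ℕ) (hn : 3 ≤ n)
    (f : MvPolynomial (Fin n) F)
    (hodd : ∀ a b : Fin n → F,
      (∃ i j : Fin n, i ≠ j ∧ a i = a j) → (∃ i j : Fin n, i ≠ j ∧ b i = b j) →
      (∀ c : F, (Finset.univ.filter (fun i => a i = c)).card % 2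
              = (Finset.univ.filter (fun i => b i = c)).card % 2) →
      eval a f = eval b f) :
    ∀ a b : Fin n → F,
      (∃ i j : Fin n, i ≠ j ∧ a i = a j) → (∃ i j : Fin n, i ≠ j ∧ b i = b j) →
      eval a f = eval b f := by
  classical
  -- Step: changing the common value of a repeated pair keeps `eval f`
  have step : ∀ (w w' : Fin n → F) (i j : Fin n), i ≠ j → w i = w j → w' i = w' j →
      (∀ m, m ≠ i → m ≠ j → w m = w' m) → eval w f = eval w' f := by
    intro w w' i j hij hw hw' hagree
    exact hodd w w' ⟨i, j, hij, hw⟩ ⟨i, j, hij, hw'⟩ (parity_aux w w' i j hij hw hw' hagree)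
  -- Key Lemma: given a repeated pair (i,j) one may freely change a third coordinate k
  have L : ∀ (b : Fin n → F) (i j k : Fin n), i ≠ j → k ≠ i → k ≠ j →
      b i = b j → ∀ z : F, eval b f = eval (Function.update b k z) f := by
    intro b i j k hij hki hkj hb z
    set w : F → F → F → Fin n → F :=
      fun x y z' m => if m = k then z' else if m = j then y else if m = i then x else b m
      with hwdef
    have hik : i ≠ k := Ne.symm hki
    have hjk : j ≠ k := Ne.symm hkj
    have hji : j ≠ i := Ne.symm hij
    -- evaluation facts about w
    have hwi : ∀ x y z', w x y z' i = x := by intro x y z'; simp [hwdef, hik, hij]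
    have hwj : ∀ x y z', w x y z' j = y := by intro x y z'; simp [hwdef, hjk]
    have hwk : ∀ x y z', w x y z' k = z' := by intro x y z'; simp [hwdef]
    have hwo : ∀ x y z' m, m ≠ i → m ≠ j → m ≠ k → w x y z' m = b m := by
      intro x y z' m h1 h2 h3; simp [hwdef, h1, h2, h3]
    -- F1/F2/F3 : constancy along each doubled pair
    have F1 : ∀ t t' z', eval (w t t z') f = eval (w t' t' z') f := by
      intro t t' z'
      apply step _ _ i j hij (by rw [hwi, hwj]) (by rw [hwi, hwj])
      intro m h1 h2
      by_cases h3 : m = k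
      · subst h3; rw [hwk, hwk]
      · rw [hwo _ _ _ _ h1 h2 h3, hwo _ _ _ _ h1 h2 h3]
    have F2 : ∀ t t' z', eval (w t z' t) f = eval (w t' z' t') f := by
      intro t t' z'
      apply step _ _ i k hik (by rw [hwi, hwk]) (by rw [hwi, hwk])
      intro m h1 h2
      by_cases h3 : m = j
      · subst h3; rw [hwj, hwj]
      · rw [hwo _ _ _ _ h1 h3 h2, hwo _ _ _ _ h1 h3 h2]
    have F3 : ∀ t t' z', eval (w z' t t) f = eval (w z' t' t') f := by
      intro t t' z'
      apply step _ _ j k hjk (by rw [hwj, hwk]) (by rw [hwj, hwk])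
      intro m h1 h2
      by_cases h3 : m = i
      · subst h3; rw [hwi, hwi]
      · rw [hwo _ _ _ _ h3 h1 h2, hwo _ _ _ _ h3 h1 h2]
    -- identify odspPt's with w
    have hodsp3 : ∀ t : F, odspPt b ({i, j, k} : Finset (Fin n)) t = w t t t := by
      intro t
      funext m
      by_cases h1 : m = i
      · subst h1; simp [odspPt, hwi]
      · by_cases h2 : m = j
        · subst h2; simp [odspPt, hwj]
        · by_cases h3 : m = k
          · subst h3; simp [odspPt, hwk]
          · simp [odspPt, h1, h2, h3, hwo _ _ _ _ h1 h2 h3]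
    have hodsp12 : ∀ t s : F, odspPt (w t t t) ({i, j} : Finset (Fin n)) s = w s s t := by
      intro t s
      funext m
      by_cases h1 : m = i
      · subst h1; simp [odspPt, hwi]
      · by_cases h2 : m = j
        · subst h2; simp [odspPt, h1, hwj]
        · by_cases h3 : m = k
          · subst h3; simp [odspPt, h1, h2, hwk]
          · simp [odspPt, h1, h2, hwo _ _ _ _ h1 h2 h3]
    have hodsp13 : ∀ t s : F, odspPt (w t t t) ({i, k} : Finset (Fin n)) s = w s t s := by
      intro t s
      funext m
      by_cases h1 : m = i
      · subst h1; simp [odspPt, hwi]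
      · by_cases h3 : m = k
        · subst h3; simp [odspPt, h1, hwk]
        · by_cases h2 : m = j
          · subst h2; simp [odspPt, h1, h3, hwj]
          · simp [odspPt, h1, h2, h3, hwo _ _ _ _ h1 h2 h3]
    have hodsp23 : ∀ t s : F, odspPt (w t t t) ({j, k} : Finset (Fin n)) s = w t s s := by
      intro t s
      funext m
      by_cases h2 : m = j
      · subst h2; simp [odspPt, hji, hwj]
      · by_cases h3 : m = k
        · subst h3; simp [odspPt, h2, hwk]
        · by_cases h1 : m = i
          · subst h1; simp [odspPt, h2, h3, hwi]
          · simp [odspPt, h1, h2, h3, hwo _ _ _ _ h1 h2 h3]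
    -- each doubled pair gives a vanishing sum of two partial derivatives
    have h12 : ∀ t : F, eval (w t t t) (pderiv i f) + eval (w t t t) (pderiv j f) = 0 := by
      intro t
      have hz := odsp_deriv_zero_of_const (w t t t) ({i, j} : Finset (Fin n)) f
        (by intro s s'; rw [hodsp12, hodsp12]; exact F1 s s' t) t
      rwa [Finset.sum_pair hij, hodsp12] at hz
    have h13 : ∀ t : F, eval (w t t t) (pderiv i f) + eval (w t t t) (pderiv k f) = 0 := by
      intro t
      have hz := odsp_deriv_zero_of_const (w t t t) ({i, k} : Finset (Fin n)) f
        (by intro s s'; rw [hodsp13, hodsp13]; exact F2 s s' t) t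
      rwa [Finset.sum_pair hik, hodsp13] at hz
    have h23 : ∀ t : F, eval (w t t t) (pderiv j f) + eval (w t t t) (pderiv k f) = 0 := by
      intro t
      have hz := odsp_deriv_zero_of_const (w t t t) ({j, k} : Finset (Fin n)) f
        (by intro s s'; rw [hodsp23, hodsp23]; exact F3 s s' t) t
      rwa [Finset.sum_pair hjk, hodsp23] at hz
    -- hence the sum of the three partials vanishes (char 0)
    have hsum3 : ∀ t : F, ∑ m ∈ ({i, j, k} : Finset (Fin n)),
        eval (odspPt b ({i, j, k} : Finset (Fin n)) t) (pderiv m f) = 0 := by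
      intro t
      have hnot : i ∉ ({j, k} : Finset (Fin n)) := by simp [hij, hik]
      rw [hodsp3, Finset.sum_insert hnot, Finset.sum_pair hjk]
      have e1 := h12 t
      have e2 := h13 t
      have e3 := h23 t
      have h2 : (2 : F) * (eval (w t t t) (pderiv i f) + eval (w t t t) (pderiv j f)
          + eval (w t t t) (pderiv k f)) = 0 := by linear_combination e1 + e2 + e3
      rcases mul_eq_zero.1 h2 with h | h
      · exact absurd h two_ne_zero
      · linear_combination h
    -- so t ↦ f(w t t t) is constant
    have hq : ∀ t t' : F, eval (w t t t) f = eval (w t' t' t') f := by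
      intro t t'
      have := odsp_const_of b ({i, j, k} : Finset (Fin n)) f hsum3 t t'
      rwa [hodsp3, hodsp3] at this
    -- conclude
    have hb1 : b = w (b i) (b i) (b k) := by
      funext m
      by_cases h1 : m = i
      · subst h1; rw [hwi]
      · by_cases h2 : m = j
        · subst h2; rw [hwj, hb]
        · by_cases h3 : m = k
          · subst h3; rw [hwk]
          · rw [hwo _ _ _ _ h1 h2 h3]
    have hb2 : Function.update b k z = w (b i) (b i) z := by
      funext m
      by_cases h3 : m = k
      · subst h3; rw [hwk, Function.update_self]
      · rw [Function.update_of_ne h3]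
        by_cases h1 : m = i
        · subst h1; rw [hwi]
        · by_cases h2 : m = j
          · subst h2; rw [hwj, hb]
          · rw [hwo _ _ _ _ h1 h2 h3]
    calc eval b f = eval (w (b i) (b i) (b k)) f := by rw [← hb1]
      _ = eval (w (b k) (b k) (b k)) f := F1 _ _ _
      _ = eval (w z z z) f := hq _ _
      _ = eval (w (b i) (b i) z) f := F1 _ _ _
      _ = eval (Function.update b k z) f := by rw [← hb2]
  -- Lemma M: every tuple with a repeat evaluates like the zero tuple
  have M : ∀ a : Fin n → F, (∃ i j : Fin n, i ≠ j ∧ a i = a j) →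
      eval a f = eval (fun _ => (0 : F)) f := by
    rintro a ⟨i, j, hij, hv⟩
    set a0 : Fin n → F := Function.update (Function.update a i 0) j 0 with ha0
    have ha0i : a0 i = 0 := by
      rw [ha0, Function.update_of_ne hij, Function.update_self]
    have ha0j : a0 j = 0 := by rw [ha0, Function.update_self]
    have h0 : eval a f = eval a0 f := by
      apply step a a0 i j hij hv (by rw [ha0i, ha0j])
      intro m h1 h2
      rw [ha0, Function.update_of_ne h2, Function.update_of_ne h1]
    rw [h0]
    -- zero out remaining coordinates by induction
    have zero_out : ∀ (N : ℕ) (bb : Fin n → F), bb i = 0 → bb j = 0 →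
        (Finset.univ.filter (fun m => bb m ≠ 0)).card ≤ N →
        eval bb f = eval (fun _ => (0 : F)) f := by
      intro N
      induction N with
      | zero =>
          intro bb h1 h2 h3
          have : bb = fun _ => (0 : F) := by
            funext m
            by_contra hm
            have hmem : m ∈ Finset.univ.filter (fun m => bb m ≠ 0) := by
              simp [hm]
            have := Finset.card_pos.2 ⟨m, hmem⟩
            omega
          rw [this]
      | succ N ih =>
          intro bb h1 h2 h3
          by_cases hz : ∀ m, bb m = 0
          · have : bb = fun _ => (0 : F) := funext hz
            rw [this]
          · push_neg at hz
            obtain ⟨k, hk⟩ := hz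
            have hki : k ≠ i := fun h => hk (h ▸ h1)
            have hkj : k ≠ j := fun h => hk (h ▸ h2)
            have hbij : bb i = bb j := by rw [h1, h2]
            rw [L bb i j k hij hki hkj hbij 0]
            apply ih
            · rw [Function.update_of_ne (Ne.symm hki)]; exact h1
            · rw [Function.update_of_ne (Ne.symm hkj)]; exact h2
            · have hsub : Finset.univ.filter (fun m => Function.update bb k 0 m ≠ 0)
                  ⊆ (Finset.univ.filter (fun m => bb m ≠ 0)).erase k := by
                intro m hm
                simp only [Finset.mem_filter, Finset.mem_univ, true_and] at hm
                have hmk : m ≠ k := by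
                  intro h; subst h; rw [Function.update_self] at hm; exact hm rfl
                rw [Function.update_of_ne hmk] at hm
                exact Finset.mem_erase.2 ⟨hmk, by simp [hm]⟩
              have hkmem : k ∈ Finset.univ.filter (fun m => bb m ≠ 0) := by simp [hk]
              have := Finset.card_le_card hsub
              have hcard := Finset.card_erase_of_mem hkmem
              have hpos := Finset.card_pos.2 ⟨k, hkmem⟩
              omega
    exact zero_out (Finset.univ.filter (fun m => a0 m ≠ 0)).card a0 ha0i ha0j le_rfl
  intro a b ha hb
  rw [M a ha, M b hb]
end

section
/- Let F = GF(q) with q a power of 2, and let f ∈ F[x_1,...,x_n] be a polynomial in which every variable has exponent at most q−1 in every monomial. Suppose (A) f is symmetric (the coefficient of x_1^{k_1}⋯x_n^{k_n} is invariant under permuting the exponent vector), and (B) the coefficient of x_1^{k_1}⋯x_n^{k_n} is 0 whenever k_i = k_j ≠ 0 for some i ≠ j. Then the polynomial obtained from f by substituting x_2 := x_1 does not contain the variable x_1. -/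
open MvPolynomial

/-- Over `F = GF(q)` with `q` a power of `2`, if `f` has all exponents
at most `q - 1`, is symmetric, and every monomial with two equal nonzero exponents has
coefficient `0`, then identifying the second variable with the first yields a function
not depending on the identified variable. -/
theorem minor_independent_of_symmetric_char2
    (F : Type*) [Field F] [Fintype F] (q n : ℕ) (hq : Fintype.card F = q)
    (hq2 : ∃ k : ℕ, 0 < k ∧ q = 2 ^ k) (hn : 2 ≤ n)
    (f : MvPolynomial (Fin n) F)
    (hdeg : ∀ d ∈ f.support, ∀ i : Fin n, d i ≤ q - 1)
    (hsymm : f.IsSymmetric)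
    (hB : ∀ d ∈ f.support, ∀ i j : Fin n, i ≠ j → d i = d j → d i = 0) :
    ∀ (x : Fin n → F) (a b : F),
      eval (fun k : Fin n => if (k : ℕ) = 0 ∨ (k : ℕ) = 1 then a else x k) f =
      eval (fun k : Fin n => if (k : ℕ) = 0 ∨ (k : ℕ) = 1 then b else x k) f := by
  intro x a b
  -- char 2
  have hchar2 : (2 : F) = 0 := by
    obtain ⟨p, hp⟩ := CharP.exists F
    have hpp : p.Prime := (CharP.char_is_prime F p)
    obtain ⟨m, hm⟩ := FiniteField.card F p
    obtain ⟨k, hk0, hk⟩ := hq2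
    have : p ∣ 2 ^ k := by
      rw [← hk, ← hq, hm.2]
      exact dvd_pow_self p m.2.ne'
    have hp2 : p = 2 := (Nat.prime_dvd_prime_iff_eq hpp Nat.prime_two).mp
      (hpp.dvd_of_dvd_pow this)
    have := hp.cast_eq_zero (R := F)
    rwa [hp2] at this
  set i0 : Fin n := ⟨0, by omega⟩ with hi0
  set i1 : Fin n := ⟨1, by omega⟩ with hi1
  have hne : i0 ≠ i1 := by simp [hi0, hi1, Fin.ext_iff]
  set σ : Equiv.Perm (Fin n) := Equiv.swap i0 i1 with hσ
  -- coefficient invariance under σ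
  have hcoeff : ∀ d : Fin n →₀ ℕ, coeff (Finsupp.mapDomain σ d) f = coeff d f := by
    intro d
    conv_lhs => rw [← hsymm σ]
    exact coeff_rename_mapDomain σ σ.injective f d
  -- main argument, for any c
  have key : ∀ c : F,
      eval (fun k : Fin n => if (k : ℕ) = 0 ∨ (k : ℕ) = 1 then c else x k) f
      = ∑ d ∈ f.support.filter (fun d => d i0 = 0 ∧ d i1 = 0),
          coeff d f * ∏ i : Fin n, (if (i : ℕ) = 0 ∨ (i : ℕ) = 1 then c else x i) ^ d i := by
    intro c
    set g : Fin n → F := fun k => if (k : ℕ) = 0 ∨ (k : ℕ) = 1 then c else x k with hg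
    have hg0 : g i0 = c := by simp [hg, hi0]
    have hg1 : g i1 = c := by simp [hg, hi1]
    have hgσ : ∀ i, g (σ i) = g i := by
      intro i
      rcases eq_or_ne i i0 with rfl | h0
      · rw [hσ, Equiv.swap_apply_left, hg0, hg1]
      rcases eq_or_ne i i1 with rfl | h1
      · rw [hσ, Equiv.swap_apply_right, hg0, hg1]
      · rw [hσ, Equiv.swap_apply_of_ne_of_ne h0 h1]
    rw [eval_eq' g f,
      ← Finset.sum_filter_add_sum_filter_not f.support (fun d => d i0 = 0 ∧ d i1 = 0)]
    have hzero : ∑ d ∈ f.support.filter (fun d => ¬(d i0 = 0 ∧ d i1 = 0)),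
        coeff d f * ∏ i : Fin n, g i ^ d i = 0 := by
      apply Finset.sum_involution (fun d _ => Finsupp.mapDomain σ d)
      · intro d hd
        have hterm : coeff (Finsupp.mapDomain σ d) f *
            ∏ i : Fin n, g i ^ (Finsupp.mapDomain σ d) i
            = coeff d f * ∏ i : Fin n, g i ^ d i := by
          rw [hcoeff]
          congr 1
          rw [← Finsupp.equivMapDomain_eq_mapDomain]
          refine Fintype.prod_equiv σ _ _ (fun i => ?_)
          rw [hgσ]
          congr 1
        rw [hterm, ← two_mul, hchar2, zero_mul]
      · intro d hd hne0
        simp only [Finset.mem_filter, Finsupp.mem_support_iff] at hd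
        have hd01 : d i0 ≠ d i1 := by
          intro heq
          have := hB d (by simpa using hd.1) i0 i1 hne heq
          exact hd.2 ⟨this, heq ▸ this⟩
        intro hcontra
        apply hd01
        have : (Finsupp.mapDomain σ d) i0 = d i0 := by rw [hcontra]
        rw [← Finsupp.equivMapDomain_eq_mapDomain] at this
        simpa [Finsupp.equivMapDomain_apply, hσ] using this.symm
      · intro d hd
        simp only [Finset.mem_filter, MvPolynomial.mem_support_iff] at hd ⊢
        constructor
        · rw [hcoeff]; exact hd.1
        · intro hcontra
          apply hd.2
          obtain ⟨h0, h1⟩ := hcontra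
          rw [← Finsupp.equivMapDomain_eq_mapDomain] at h0 h1
          simp only [Finsupp.equivMapDomain_apply, hσ, Equiv.symm_swap,
            Equiv.swap_apply_left, Equiv.swap_apply_right] at h0 h1
          exact ⟨h1, h0⟩
      · intro d hd
        rw [← Finsupp.mapDomain_comp]
        have : (σ : Fin n → Fin n) ∘ σ = id := by
          funext i; simp [hσ]
        rw [this, Finsupp.mapDomain_id]
    rw [hzero, add_zero]
  rw [key a, key b]
  refine Finset.sum_congr rfl (fun d hd => ?_)
  simp only [Finset.mem_filter] at hd
  congr 1
  refine Finset.prod_congr rfl (fun i _ => ?_)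
  by_cases h : (i : ℕ) = 0 ∨ (i : ℕ) = 1
  · have hdi : d i = 0 := by
      rcases h with h | h
      · have : i = i0 := Fin.ext h
        rw [this]; exact hd.2.1
      · have : i = i1 := Fin.ext h
        rw [this]; exact hd.2.2
    simp [hdi]
  · simp [h]
end

section
/- Let F = GF(q) with q a power of 2, and let f ∈ F[x_1,...,x_n] satisfy conditions (A) and (B): f is symmetric in the sense that its coefficients are invariant under permutations of the exponent vector, and the coefficient of any monomial with two equal nonzero exponents is 0. Then the induced polynomial function f : F^n → F is determined by oddsupp: f(a) = f(b) whenever oddsupp(a) = oddsupp(b). -/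
open MvPolynomial

private lemma aux_two_eq_zero (F : Type*) [Field F] [Fintype F] (k : ℕ) (hk : 0 < k)
    (hcard : Fintype.card F = 2 ^ k) : (2 : F) = 0 := by
  have h := FiniteField.cast_card_eq_zero F
  rw [hcard] at h
  push_cast at h
  exact (pow_eq_zero_iff hk.ne').mp h

private def cntFn {n : ℕ} {F : Type*} [DecidableEq F] (g : Fin n → F) (c : F) : ℕ :=
  (Finset.univ.filter (fun i => g i = c)).card

private lemma aux_cnt_update {n : ℕ} {F : Type*} [DecidableEq F] (a : Fin n → F) (i : Fin n)
    (t c : F) :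
    cntFn (Function.update a i t) c + (if a i = c then 1 else 0)
      = cntFn a c + (if t = c then 1 else 0) := by
  unfold cntFn
  rw [Finset.card_filter, Finset.card_filter,
    ← Finset.sum_erase_add Finset.univ (fun k => if Function.update a i t k = c then 1 else 0)
      (Finset.mem_univ i),
    ← Finset.sum_erase_add Finset.univ (fun k => if a k = c then 1 else 0) (Finset.mem_univ i)]
  have hupd : ∀ k ∈ Finset.univ.erase i,
      (if Function.update a i t k = c then 1 else 0) = (if a k = c then 1 else 0) := by
    intro k hk
    rw [Function.update_of_ne (Finset.ne_of_mem_erase hk)]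
  rw [Finset.sum_congr rfl hupd, Function.update_self]
  omega

private lemma aux_cnt_sum {n : ℕ} {F : Type*} [Fintype F] [DecidableEq F] (g : Fin n → F) :
    ∑ c : F, cntFn g c = n := by
  unfold cntFn
  rw [← Finset.card_eq_sum_card_fiberwise (fun x _ => Finset.mem_univ (g x)),
    Finset.card_univ, Fintype.card_fin]

private lemma aux_eval_filtered {F : Type*} [Field F] {n : ℕ}
    (h2 : (2 : F) = 0)
    (f : MvPolynomial (Fin n) F) (hsymm : f.IsSymmetric)
    (hB : ∀ d ∈ f.support, ∀ i j : Fin n, i ≠ j → d i = d j → d i = 0)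
    (a : Fin n → F) (i j : Fin n) (hij : i ≠ j) (ha : a i = a j) :
    eval a f = ∑ d ∈ f.support.filter (fun d => d i = 0 ∧ d j = 0),
        coeff d f * ∏ k, a k ^ d k := by
  classical
  rw [eval_eq', ← Finset.sum_filter_add_sum_filter_not f.support (fun d => d i = 0 ∧ d j = 0)]
  have hzero : ∑ d ∈ f.support.filter (fun d => ¬(d i = 0 ∧ d j = 0)),
      coeff d f * ∏ k, a k ^ d k = 0 := by
    set e : Fin n ≃ Fin n := Equiv.swap i j with he
    have hcoeff : ∀ d : Fin n →₀ ℕ, coeff (Finsupp.equivMapDomain e d) f = coeff d f := by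
      intro d
      rw [Finsupp.equivMapDomain_eq_mapDomain]
      have := coeff_rename_mapDomain (⇑e) e.injective f d
      rwa [hsymm e] at this
    have haswap : ∀ x, a (e x) = a x := by
      intro x
      rcases eq_or_ne x i with rfl | hxi
      · rw [he, Equiv.swap_apply_left]; exact ha.symm
      rcases eq_or_ne x j with rfl | hxj
      · rw [he, Equiv.swap_apply_right]; exact ha
      · rw [he, Equiv.swap_apply_of_ne_of_ne hxi hxj]
    have hsymmE : e.symm = e := by rw [he, Equiv.symm_swap]
    have hprod : ∀ d : Fin n →₀ ℕ,
        ∏ k, a k ^ (Finsupp.equivMapDomain e d) k = ∏ k, a k ^ d k := by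
      intro d
      refine Fintype.prod_equiv e (fun k => a k ^ (Finsupp.equivMapDomain e d) k)
        (fun k => a k ^ d k) ?_
      intro x
      show a x ^ (Finsupp.equivMapDomain e d) x = a (e x) ^ d (e x)
      rw [Finsupp.equivMapDomain_apply, hsymmE, haswap x]
    refine Finset.sum_involution (fun d _ => Finsupp.equivMapDomain e d) ?_ ?_ ?_ ?_
    · intro d _
      show coeff d f * ∏ k, a k ^ d k
          + coeff (Finsupp.equivMapDomain e d) f * ∏ k, a k ^ (Finsupp.equivMapDomain e d) k = 0
      rw [hcoeff d, hprod d, ← two_mul, ← mul_assoc, h2, zero_mul, zero_mul]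
    · intro d hd _
      simp only [Finset.mem_filter] at hd
      have hd' : d i ≠ d j := by
        intro hEq
        have h0 := hB d hd.1 i j hij hEq
        exact hd.2 ⟨h0, hEq ▸ h0⟩
      intro hcontra
      have hcontra' : Finsupp.equivMapDomain e d = d := hcontra
      apply hd'
      have h1 : (Finsupp.equivMapDomain e d) i = d i := by rw [hcontra']
      rw [Finsupp.equivMapDomain_apply, hsymmE, he, Equiv.swap_apply_left] at h1
      exact h1.symm
    · intro d hd
      show Finsupp.equivMapDomain e d ∈ _
      simp only [Finset.mem_filter] at hd ⊢
      refine ⟨?_, ?_⟩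
      · rw [mem_support_iff, hcoeff d]
        exact mem_support_iff.mp hd.1
      · intro hcon
        apply hd.2
        rw [Finsupp.equivMapDomain_apply, Finsupp.equivMapDomain_apply, hsymmE, he,
          Equiv.swap_apply_left, Equiv.swap_apply_right] at hcon
        exact ⟨hcon.2, hcon.1⟩
    · intro d _
      show Finsupp.equivMapDomain e (Finsupp.equivMapDomain e d) = d
      ext x
      simp only [Finsupp.equivMapDomain_apply, hsymmE, he, Equiv.symm_swap, Equiv.swap_apply_self]
  rw [hzero, add_zero]

private lemma aux_eval_pair_replace {F : Type*} [Field F] {n : ℕ}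
    (h2 : (2 : F) = 0)
    (f : MvPolynomial (Fin n) F) (hsymm : f.IsSymmetric)
    (hB : ∀ d ∈ f.support, ∀ i j : Fin n, i ≠ j → d i = d j → d i = 0)
    (a : Fin n → F) (i j : Fin n) (hij : i ≠ j) (ha : a i = a j) (t : F) :
    eval (Function.update (Function.update a i t) j t) f = eval a f := by
  classical
  set a' := Function.update (Function.update a i t) j t with ha'
  have ha'i : a' i = t := by
    rw [ha', Function.update_of_ne hij, Function.update_self]
  have ha'j : a' j = t := by
    rw [ha', Function.update_self]
  rw [aux_eval_filtered h2 f hsymm hB a' i j hij (ha'i.trans ha'j.symm),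
    aux_eval_filtered h2 f hsymm hB a i j hij ha]
  refine Finset.sum_congr rfl ?_
  intro d hd
  simp only [Finset.mem_filter] at hd
  congr 1
  refine Finset.prod_congr rfl ?_
  intro k _
  rcases eq_or_ne k i with rfl | hki
  · rw [hd.2.1, pow_zero, pow_zero]
  rcases eq_or_ne k j with rfl | hkj
  · rw [hd.2.2, pow_zero, pow_zero]
  · rw [ha', Function.update_of_ne hkj, Function.update_of_ne hki]

private lemma aux_exists_perm {n : ℕ} {F : Type*} [DecidableEq F] (a b : Fin n → F)
    (h : ∀ c : F, cntFn a c = cntFn b c) :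
    ∃ σ : Equiv.Perm (Fin n), a = b ∘ σ := by
  classical
  have hc : ∀ c : F, Fintype.card {k // a k = c} = Fintype.card {k // b k = c} := by
    intro c
    rw [Fintype.card_subtype, Fintype.card_subtype]
    exact h c
  let e : ∀ c : F, {k // a k = c} ≃ {k // b k = c} := fun c => Fintype.equivOfCardEq (hc c)
  let σ : Equiv.Perm (Fin n) :=
    ((Equiv.sigmaFiberEquiv a).symm.trans (Equiv.sigmaCongrRight e)).trans
      (Equiv.sigmaFiberEquiv b)
  refine ⟨σ, ?_⟩
  funext k
  show a k = b (σ k)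
  have hσ : σ k = ((e (a k)) ⟨k, rfl⟩ : {m // b m = a k}).val := rfl
  rw [hσ]
  exact ((e (a k)) ⟨k, rfl⟩).prop.symm

private lemma aux_eval_perm {F : Type*} [Field F] {n : ℕ}
    (f : MvPolynomial (Fin n) F) (hsymm : f.IsSymmetric)
    (a : Fin n → F) (σ : Equiv.Perm (Fin n)) : eval (a ∘ σ) f = eval a f := by
  conv_rhs => rw [← hsymm σ]
  rw [eval_rename]

/-- Over `F = GF(q)` with `q` a power of `2`, a polynomial satisfying
conditions (A) (symmetry) and (B) (monomials with two equal nonzero exponents vanish)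
induces a function determined by `oddsupp`. -/
theorem determined_by_oddsupp_of_symmetric_char2
    (F : Type*) [Field F] [Fintype F] [DecidableEq F] (q n : ℕ) (hq : Fintype.card F = q)
    (hq2 : ∃ k : ℕ, 0 < k ∧ q = 2 ^ k)
    (f : MvPolynomial (Fin n) F)
    (hsymm : f.IsSymmetric)
    (hB : ∀ d ∈ f.support, ∀ i j : Fin n, i ≠ j → d i = d j → d i = 0) :
    ∀ a b : Fin n → F,
      (∀ c : F, (Finset.univ.filter (fun i => a i = c)).card % 2
              = (Finset.univ.filter (fun i => b i = c)).card % 2) →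
      eval a f = eval b f := by
  classical
  obtain ⟨k, hk, hqk⟩ := hq2
  have h2 : (2 : F) = 0 := aux_two_eq_zero F k hk (hq.trans hqk)
  intro a b hpar0
  have hpar : ∀ c : F, cntFn a c % 2 = cntFn b c % 2 := hpar0
  clear hpar0
  have hex : ∀ u v : Fin n → F, (∃ c : F, cntFn u c ≠ cntFn v c) →
      ∃ c : F, cntFn v c < cntFn u c := by
    intro u v ⟨c₁, hc₁⟩
    by_contra hcon
    push_neg at hcon
    have hlt : ∑ c : F, cntFn u c < ∑ c : F, cntFn v c :=
      Finset.sum_lt_sum (fun c _ => hcon c)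
        ⟨c₁, Finset.mem_univ _, lt_of_le_of_ne (hcon c₁) hc₁⟩
    rw [aux_cnt_sum u, aux_cnt_sum v] at hlt
    omega
  have main : ∀ m : ℕ, ∀ a : Fin n → F,
      (∀ c : F, cntFn a c % 2 = cntFn b c % 2) →
      (∑ c : F, (cntFn a c - cntFn b c + (cntFn b c - cntFn a c))) = m →
      eval a f = eval b f := by
    intro m
    induction m using Nat.strong_induction_on with
    | _ m IH =>
      intro a hpar hm
      by_cases hAll : ∀ c : F, cntFn a c = cntFn b c
      · obtain ⟨σ, hσ⟩ := aux_exists_perm a b hAll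
        rw [hσ]
        exact aux_eval_perm f hsymm b σ
      · push_neg at hAll
        obtain ⟨c0, hc0⟩ := hex a b hAll
        obtain ⟨t0, ht0⟩ := hex b a
          (by obtain ⟨c₁, hc₁⟩ := hAll; exact ⟨c₁, Ne.symm hc₁⟩)
        have hct : c0 ≠ t0 := by
          intro h
          rw [h] at hc0
          omega
        have hc0two : cntFn b c0 + 2 ≤ cntFn a c0 := by
          have := hpar c0
          omega
        have ht0two : cntFn a t0 + 2 ≤ cntFn b t0 := by
          have := hpar t0
          omega
        have hcard2 : 1 < (Finset.univ.filter (fun x => a x = c0)).card := by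
          have h1 : 1 < cntFn a c0 := by omega
          exact h1
        obtain ⟨i, hi, j, hj, hij⟩ := Finset.one_lt_card.mp hcard2
        simp only [Finset.mem_filter, Finset.mem_univ, true_and] at hi hj
        set a' := Function.update (Function.update a i t0) j t0 with ha'
        have hmove : eval a' f = eval a f :=
          aux_eval_pair_replace h2 f hsymm hB a i j hij (hi.trans hj.symm) t0
        have hE : ∀ c : F, cntFn a' c + 2 * (if c0 = c then 1 else 0)
            = cntFn a c + 2 * (if t0 = c then 1 else 0) := by
          intro c
          have hU1 := aux_cnt_update a i t0 c
          have hU2 := aux_cnt_update (Function.update a i t0) j t0 c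
          rw [Function.update_of_ne (Ne.symm hij)] at hU2
          rw [hi] at hU1
          rw [hj] at hU2
          rw [ha']
          omega
        have hEc0 : cntFn a' c0 + 2 = cntFn a c0 := by
          have h := hE c0
          rw [if_pos rfl, if_neg (Ne.symm hct)] at h
          omega
        have hEt0 : cntFn a' t0 = cntFn a t0 + 2 := by
          have h := hE t0
          rw [if_neg hct, if_pos rfl] at h
          omega
        have hEother : ∀ c : F, c ≠ c0 → c ≠ t0 → cntFn a' c = cntFn a c := by
          intro c h1 h2'
          have h := hE c
          rw [if_neg (Ne.symm h1), if_neg (Ne.symm h2')] at h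
          omega
        have hpar' : ∀ c : F, cntFn a' c % 2 = cntFn b c % 2 := by
          intro c
          have hp := hpar c
          by_cases h1 : c = c0
          · subst h1
            omega
          by_cases h2' : c = t0
          · subst h2'
            omega
          · have := hEother c h1 h2'
            omega
        have hlt : (∑ c : F, (cntFn a' c - cntFn b c + (cntFn b c - cntFn a' c))) < m := by
          rw [← hm]
          refine Finset.sum_lt_sum (fun c _ => ?_) ⟨c0, Finset.mem_univ _, ?_⟩
          · by_cases h1 : c = c0
            · subst h1
              omega
            by_cases h2' : c = t0
            · subst h2'
              omega
            · have := hEother c h1 h2'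
              omega
          · omega
        calc eval a f = eval a' f := hmove.symm
          _ = eval b f := IH _ hlt a' hpar' rfl
  exact main _ a hpar rfl
end

section
/- A function f : A^n → B is determined by oddsupp (i.e., factors as f = f* ∘ oddsupp for some f* : P(A) → B) if and only if f is totally symmetric and the identification minor f(x_1, x_1, x_3, ..., x_n) does not depend on x_1. -/
open Finset

section Aux

variable {A : Type*} [DecidableEq A]

/-- count of value `c` among entries of the tuple `x` -/
private def cnt {N : ℕ} (x : Fin N → A) (c : A) : ℕ :=
  (Finset.univ.filter (fun i => x i = c)).card

private lemma cnt_card_filter {N : ℕ} (x : Fin N → A) (c : A) :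
    cnt x c = ∑ i : Fin N, (if x i = c then 1 else 0) := by
  unfold cnt; rw [Finset.card_filter]

private lemma cnt_comp_equiv {N : ℕ} (x : Fin N → A) (π : Equiv.Perm (Fin N)) (c : A) :
    cnt (x ∘ π) c = cnt x c := by
  rw [cnt_card_filter, cnt_card_filter]
  exact Equiv.sum_comp π (fun i => if x i = c then 1 else 0)

private lemma cnt_pos {N : ℕ} {x : Fin N → A} {c : A} (h : 0 < cnt x c) : ∃ i, x i = c := by
  obtain ⟨i, hi⟩ := Finset.card_pos.mp h
  exact ⟨i, (Finset.mem_filter.mp hi).2⟩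

private lemma cnt_succ {N : ℕ} (x : Fin (N + 1) → A) (c : A) :
    cnt x c = (if x 0 = c then 1 else 0) + cnt (Fin.tail x) c := by
  rw [cnt_card_filter, cnt_card_filter, Fin.sum_univ_succ]
  rfl

private lemma sum_cnt {N : ℕ} (x : Fin N → A) (S : Finset A) (h : ∀ i, x i ∈ S) :
    ∑ c ∈ S, cnt x c = N := by
  have := Finset.card_eq_sum_card_fiberwise (f := x) (s := Finset.univ) (t := S)
    (fun i _ => h i)
  simpa [cnt] using this.symm

private lemma cnt_eq_zero {N : ℕ} (x : Fin N → A) {c : A} (h : ∀ i, x i ≠ c) :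
    cnt x c = 0 := by
  unfold cnt
  rw [Finset.card_eq_zero, Finset.filter_eq_empty_iff]
  exact fun i _ => h i

/-- tuples with equal counts differ by a permutation -/
private lemma exists_comp_eq_of_cnt_eq :
    ∀ {N : ℕ} (x y : Fin N → A), (∀ c, cnt x c = cnt y c) →
      ∃ σ : Equiv.Perm (Fin N), x ∘ σ = y := by
  intro N
  induction N with
  | zero => exact fun x y _ => ⟨1, funext fun i => i.elim0⟩
  | succ N ih =>
    intro x y h
    have h0 : 0 < cnt x (y 0) := by
      rw [h]
      unfold cnt
      refine Finset.card_pos.mpr ⟨0, ?_⟩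
      simp
    obtain ⟨i, hi⟩ := cnt_pos h0
    set τ := Equiv.swap (0 : Fin (N + 1)) i with hτ
    have hx0 : (x ∘ τ) 0 = y 0 := by
      simp [hτ, Function.comp, Equiv.swap_apply_left, hi]
    have htail : ∀ c, cnt (Fin.tail (x ∘ τ)) c = cnt (Fin.tail y) c := by
      intro c
      have e1 := cnt_succ (x ∘ τ) c
      have e2 := cnt_succ y c
      have e3 : cnt (x ∘ τ) c = cnt y c := (cnt_comp_equiv x τ c).trans (h c)
      rw [hx0] at e1
      omega
    obtain ⟨σ₀, hσ₀⟩ := ih _ _ htail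
    refine ⟨(Equiv.Perm.decomposeFin.symm (0, σ₀)).trans τ, funext fun k => ?_⟩
    induction k using Fin.cases with
    | zero => simpa using hx0
    | succ j =>
      have := congrFun hσ₀ j
      simpa [Function.comp, Fin.tail, Equiv.Perm.decomposeFin_symm_apply_succ] using this

end Aux

section Main

variable {A B : Type*} [DecidableEq A] {n : ℕ} {f : (Fin (n + 2) → A) → B}

private lemma minor' (hs : ∀ (π : Equiv.Perm (Fin (n + 2))) (x : Fin (n + 2) → A), f (x ∘ π) = f x)
    (hm : ∀ (x : Fin (n + 2) → A) (a b : A),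
      f (fun k => if k = 0 ∨ k = 1 then a else x k) =
      f (fun k => if k = 0 ∨ k = 1 then b else x k))
    {i j : Fin (n + 2)} (hij : i ≠ j) (y : Fin (n + 2) → A) (a b : A) :
    f (fun k => if k = i ∨ k = j then a else y k) =
    f (fun k => if k = i ∨ k = j then b else y k) := by
  set s1 := Equiv.swap (0 : Fin (n + 2)) i with hs1
  set j0 := s1.symm j with hj0
  have hj0ne : j0 ≠ 0 := by
    intro hcon
    apply hij
    have : j = s1 0 := by rw [← hcon, hj0]; simp
    simp [hs1, Equiv.swap_apply_left] at this
    exact this.symm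
  set s2 := Equiv.swap (1 : Fin (n + 2)) j0 with hs2
  set π := s2.trans s1 with hπ
  have hπ0 : π 0 = i := by
    have h20 : s2 0 = 0 := by
      apply Equiv.swap_apply_of_ne_of_ne
      · exact Fin.zero_ne_one
      · exact fun hc => hj0ne hc.symm
    simp [hπ, Equiv.trans_apply, h20, hs1, Equiv.swap_apply_left]
  have hπ1 : π 1 = j := by
    have h21 : s2 1 = j0 := Equiv.swap_apply_left _ _
    simp [hπ, Equiv.trans_apply, h21, hj0]
  have key : ∀ c : A,
      (fun k => if k = i ∨ k = j then c else y k) ∘ π =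
      fun k => if k = 0 ∨ k = 1 then c else (y ∘ π) k := by
    intro c
    funext k
    simp only [Function.comp]
    by_cases h0 : k = 0
    · subst h0; simp [hπ0]
    by_cases h1 : k = 1
    · subst h1; simp [hπ1]
    have hni : π k ≠ i := fun hc => h0 (π.injective (hc.trans hπ0.symm))
    have hnj : π k ≠ j := fun hc => h1 (π.injective (hc.trans hπ1.symm))
    simp [h0, h1, hni, hnj]
  calc f (fun k => if k = i ∨ k = j then a else y k)
      = f ((fun k => if k = i ∨ k = j then a else y k) ∘ π) := (hs π _).symm
    _ = f (fun k => if k = 0 ∨ k = 1 then a else (y ∘ π) k) := by rw [key a]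
    _ = f (fun k => if k = 0 ∨ k = 1 then b else (y ∘ π) k) := hm _ a b
    _ = f ((fun k => if k = i ∨ k = j then b else y k) ∘ π) := by rw [key b]
    _ = f (fun k => if k = i ∨ k = j then b else y k) := hs π _

/-- cnt computation for the move replacing two `a`-entries by `b` -/
private lemma cnt_move {N : ℕ} (x : Fin N → A) {i j : Fin N} (hij : i ≠ j) {a : A}
    (hi : x i = a) (hj : x j = a) (b : A) (hab : a ≠ b) :
    (cnt (fun k => if k = i ∨ k = j then b else x k) a + 2 = cnt x a)
    ∧ (cnt (fun k => if k = i ∨ k = j then b else x k) b = cnt x b + 2)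
    ∧ (∀ c, c ≠ a → c ≠ b → cnt (fun k => if k = i ∨ k = j then b else x k) c = cnt x c) := by
  classical
  set x' : Fin N → A := fun k => if k = i ∨ k = j then b else x k with hx'
  have hmem : i ∈ (Finset.univ : Finset (Fin N)) := Finset.mem_univ i
  have hmemj : j ∈ (Finset.univ.erase i) := Finset.mem_erase.mpr ⟨hij.symm, Finset.mem_univ j⟩
  have split : ∀ (g : Fin N → ℕ),
      ∑ k, g k = g i + (g j + ∑ k ∈ (Finset.univ.erase i).erase j, g k) := by
    intro g
    rw [← Finset.add_sum_erase _ g hmem, ← Finset.add_sum_erase _ g hmemj]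
  have hx'i : x' i = b := by simp [hx']
  have hx'j : x' j = b := by simp [hx']
  have key2 : ∀ c, cnt x' c = (if b = c then 1 else 0) +
      ((if b = c then 1 else 0) + ∑ k ∈ (Finset.univ.erase i).erase j, (if x k = c then 1 else 0)) := by
    intro c
    rw [cnt_card_filter, split (fun k => if x' k = c then 1 else 0), hx'i, hx'j]
    congr 2
    refine Finset.sum_congr rfl ?_
    intro k hk
    have h1 := Finset.mem_erase.mp hk
    have h2 := Finset.mem_erase.mp h1.2
    simp [hx', h1.1, h2.1]
  have key1 : ∀ c, cnt x c = (if a = c then 1 else 0) +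
      ((if a = c then 1 else 0) + ∑ k ∈ (Finset.univ.erase i).erase j, (if x k = c then 1 else 0)) := by
    intro c
    rw [cnt_card_filter, split (fun k => if x k = c then 1 else 0), hi, hj]
  refine ⟨?_, ?_, ?_⟩
  · have e1 := key2 a
    have e2 := key1 a
    rw [if_neg (fun h => hab h.symm)] at e1
    rw [if_pos rfl] at e2
    omega
  · have e1 := key2 b
    have e2 := key1 b
    rw [if_pos rfl] at e1
    rw [if_neg hab] at e2
    omega
  · intro c hca hcb
    have e1 := key2 c
    have e2 := key1 c
    rw [if_neg (fun h => hcb h.symm)] at e1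
    rw [if_neg (fun h => hca h.symm)] at e2
    omega

private def Dd (S : Finset A) {N : ℕ} (x y : Fin N → A) : ℕ :=
  ∑ c ∈ S, ((cnt x c - cnt y c) + (cnt y c - cnt x c))

private lemma Dd_superset {S T : Finset A} (hST : S ⊆ T) {N : ℕ} (x y : Fin N → A)
    (hx : ∀ i, x i ∈ S) (hy : ∀ i, y i ∈ S) : Dd T x y = Dd S x y := by
  refine (Finset.sum_subset hST ?_).symm
  intro c _ hcS
  have hxc : cnt x c = 0 := cnt_eq_zero x (fun i hc => hcS (hc ▸ hx i))
  have hyc : cnt y c = 0 := cnt_eq_zero y (fun i hc => hcS (hc ▸ hy i))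
  rw [hxc, hyc]
  rfl

/-- the key lemma: tuples with the same odd support give the same value -/
private lemma key (hs : ∀ (π : Equiv.Perm (Fin (n + 2))) (x : Fin (n + 2) → A), f (x ∘ π) = f x)
    (hm : ∀ (x : Fin (n + 2) → A) (a b : A),
      f (fun k => if k = 0 ∨ k = 1 then a else x k) =
      f (fun k => if k = 0 ∨ k = 1 then b else x k)) :
    ∀ (x y : Fin (n + 2) → A), (∀ c, Odd (cnt x c) ↔ Odd (cnt y c)) → f x = f y := by
  -- helper: one reduction step
  have step : ∀ (x y : Fin (n + 2) → A), (∀ c, Odd (cnt x c) ↔ Odd (cnt y c)) →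
      ∀ a, cnt y a < cnt x a →
      ∃ x', f x = f x' ∧ (∀ c, Odd (cnt x' c) ↔ Odd (cnt x c)) ∧
        ∀ S : Finset A, a ∈ S → (∀ i, x i ∈ S) → (∀ i, y i ∈ S) → (∀ i, x' i ∈ S) →
          Dd S x' y < Dd S x y := by
    intro x y hpar a ha
    -- counts have equal parity
    have hpar' : ∀ c, cnt x c % 2 = cnt y c % 2 := by
      intro c
      have := hpar c
      rw [Nat.odd_iff, Nat.odd_iff] at this
      omega
    have ha2 : cnt y a + 2 ≤ cnt x a := by have := hpar' a; omega
    -- find b with cnt x b < cnt y b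
    set S0 : Finset A := (Finset.univ.image x) ∪ (Finset.univ.image y) with hS0
    have hxS0 : ∀ i, x i ∈ S0 := fun i => Finset.mem_union_left _ (Finset.mem_image_of_mem x (Finset.mem_univ i))
    have hyS0 : ∀ i, y i ∈ S0 := fun i => Finset.mem_union_right _ (Finset.mem_image_of_mem y (Finset.mem_univ i))
    have hsumx : ∑ c ∈ S0, cnt x c = n + 2 := sum_cnt x S0 hxS0
    have hsumy : ∑ c ∈ S0, cnt y c = n + 2 := sum_cnt y S0 hyS0
    have haS0 : a ∈ S0 := by
      obtain ⟨i, hi⟩ := cnt_pos (show 0 < cnt x a by omega)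
      exact hi ▸ hxS0 i
    have hb : ∃ b ∈ S0, cnt x b < cnt y b := by
      by_contra hcon
      push_neg at hcon
      have : ∑ c ∈ S0, cnt y c < ∑ c ∈ S0, cnt x c :=
        Finset.sum_lt_sum (fun c hc => hcon c hc) ⟨a, haS0, ha⟩
      omega
    obtain ⟨b, hbS0, hblt⟩ := hb
    have hb2 : cnt x b + 2 ≤ cnt y b := by have := hpar' b; omega
    have hab : a ≠ b := by intro hc; subst hc; omega
    -- two positions of x with value a
    have h2 : 1 < (Finset.univ.filter (fun i => x i = a)).card := by
      have : cnt x a = (Finset.univ.filter (fun i => x i = a)).card := rfl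
      omega
    obtain ⟨i, hi, j, hj, hij⟩ := Finset.one_lt_card.mp h2
    have hxi : x i = a := (Finset.mem_filter.mp hi).2
    have hxj : x j = a := (Finset.mem_filter.mp hj).2
    set x' : Fin (n + 2) → A := fun k => if k = i ∨ k = j then b else x k with hx'
    obtain ⟨hca2, hcb2, hcother⟩ := cnt_move x hij hxi hxj b hab
    rw [← hx'] at hca2 hcb2
    simp only [← hx'] at hcother
    have hfx : f x = f x' := by
      have hxx : (fun k => if k = i ∨ k = j then a else x k) = x := by
        funext k
        by_cases hk : k = i ∨ k = j
        · rcases hk with hk | hk <;> subst hk <;> simp [hxi, hxj]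
        · simp [hk]
      calc f x = f (fun k => if k = i ∨ k = j then a else x k) := by rw [hxx]
        _ = f x' := minor' hs hm hij x a b
    refine ⟨x', hfx, ?_, ?_⟩
    · intro c
      rw [Nat.odd_iff, Nat.odd_iff]
      by_cases hcac : c = a
      · subst hcac; omega
      · by_cases hcbc : c = b
        · subst hcbc; omega
        · rw [hcother c hcac hcbc]
    · intro S haS hxS hyS hx'S
      refine Finset.sum_lt_sum ?_ ⟨a, haS, ?_⟩
      · intro c _
        by_cases hcac : c = a
        · subst hcac; omega
        · by_cases hcbc : c = b
          · subst hcbc; omega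
          · rw [hcother c hcac hcbc]
      · omega
  -- main strong induction on Dd
  suffices H : ∀ d : ℕ, ∀ (x y : Fin (n + 2) → A),
      Dd ((Finset.univ.image x) ∪ (Finset.univ.image y)) x y = d →
      (∀ c, Odd (cnt x c) ↔ Odd (cnt y c)) → f x = f y by
    intro x y h
    exact H _ x y rfl h
  intro d
  induction d using Nat.strong_induction_on with
  | _ d ih =>
    intro x y hd hpar
    by_cases heq : ∀ c, cnt x c = cnt y c
    · obtain ⟨σ, hσ⟩ := exists_comp_eq_of_cnt_eq x y heq
      rw [← hσ, hs]
    · push_neg at heq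
      obtain ⟨a, hane⟩ := heq
      rcases lt_or_gt_of_ne hane with hlt | hgt
      · -- cnt x a < cnt y a : apply step to y
        have hpar' : ∀ c, Odd (cnt y c) ↔ Odd (cnt x c) := fun c => (hpar c).symm
        obtain ⟨y', hfy, hpary, hDd⟩ := step y x hpar' a hlt
        -- work in enlarged support
        set S : Finset A := ((Finset.univ.image x) ∪ (Finset.univ.image y)) ∪ (Finset.univ.image y') with hS
        have hxS : ∀ i, x i ∈ S := fun i => Finset.mem_union_left _ (Finset.mem_union_left _ (Finset.mem_image_of_mem x (Finset.mem_univ i)))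
        have hyS : ∀ i, y i ∈ S := fun i => Finset.mem_union_left _ (Finset.mem_union_right _ (Finset.mem_image_of_mem y (Finset.mem_univ i)))
        have hy'S : ∀ i, y' i ∈ S := fun i => Finset.mem_union_right _ (Finset.mem_image_of_mem y' (Finset.mem_univ i))
        have haS : a ∈ S := by
          obtain ⟨i, hi⟩ := cnt_pos (show 0 < cnt y a by omega)
          exact hi ▸ hyS i
        have hDsym : ∀ (T : Finset A) (u v : Fin (n + 2) → A), Dd T u v = Dd T v u := by
          intro T u v
          unfold Dd
          exact Finset.sum_congr rfl (fun c _ => by omega)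
        have hlt' : Dd S y' x < Dd S y x := hDd S haS hyS hxS hy'S
        have e1 : Dd S x y = Dd ((Finset.univ.image x) ∪ (Finset.univ.image y)) x y := by
          apply Dd_superset
          · intro c hc
            exact Finset.mem_union_left _ hc
          · exact fun i => Finset.mem_union_left _ (Finset.mem_image_of_mem x (Finset.mem_univ i))
          · exact fun i => Finset.mem_union_right _ (Finset.mem_image_of_mem y (Finset.mem_univ i))
        have e2 : Dd S x y' = Dd ((Finset.univ.image x) ∪ (Finset.univ.image y')) x y' := by
          apply Dd_superset
          · intro c hc
            rcases Finset.mem_union.mp hc with h | h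
            · exact Finset.mem_union_left _ (Finset.mem_union_left _ h)
            · exact Finset.mem_union_right _ h
          · exact fun i => Finset.mem_union_left _ (Finset.mem_image_of_mem x (Finset.mem_univ i))
          · exact fun i => Finset.mem_union_right _ (Finset.mem_image_of_mem y' (Finset.mem_univ i))
        have hDxy' : Dd ((Finset.univ.image x) ∪ (Finset.univ.image y')) x y' < d := by
          rw [← e2]
          calc Dd S x y' = Dd S y' x := hDsym S x y'
            _ < Dd S y x := hlt'
            _ = Dd S x y := hDsym S y x
            _ = d := by rw [e1, hd]
        have hpar'' : ∀ c, Odd (cnt x c) ↔ Odd (cnt y' c) := by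
          intro c
          rw [hpar c, ← hpary c]
        have := ih _ hDxy' x y' rfl hpar''
        rw [this, ← hfy]
      · -- cnt y a < cnt x a : apply step to x
        obtain ⟨x', hfx, hparx, hDd⟩ := step x y hpar a hgt
        set S : Finset A := ((Finset.univ.image x) ∪ (Finset.univ.image y)) ∪ (Finset.univ.image x') with hS
        have hxS : ∀ i, x i ∈ S := fun i => Finset.mem_union_left _ (Finset.mem_union_left _ (Finset.mem_image_of_mem x (Finset.mem_univ i)))
        have hyS : ∀ i, y i ∈ S := fun i => Finset.mem_union_left _ (Finset.mem_union_right _ (Finset.mem_image_of_mem y (Finset.mem_univ i)))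
        have hx'S : ∀ i, x' i ∈ S := fun i => Finset.mem_union_right _ (Finset.mem_image_of_mem x' (Finset.mem_univ i))
        have haS : a ∈ S := by
          obtain ⟨i, hi⟩ := cnt_pos (show 0 < cnt x a by omega)
          exact hi ▸ hxS i
        have hlt' : Dd S x' y < Dd S x y := hDd S haS hxS hyS hx'S
        have e1 : Dd S x y = Dd ((Finset.univ.image x) ∪ (Finset.univ.image y)) x y := by
          apply Dd_superset
          · intro c hc
            exact Finset.mem_union_left _ hc
          · exact fun i => Finset.mem_union_left _ (Finset.mem_image_of_mem x (Finset.mem_univ i))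
          · exact fun i => Finset.mem_union_right _ (Finset.mem_image_of_mem y (Finset.mem_univ i))
        have e2 : Dd S x' y = Dd ((Finset.univ.image x') ∪ (Finset.univ.image y)) x' y := by
          apply Dd_superset
          · intro c hc
            rcases Finset.mem_union.mp hc with h | h
            · exact Finset.mem_union_right _ h
            · exact Finset.mem_union_left _ (Finset.mem_union_right _ h)
          · exact fun i => Finset.mem_union_left _ (Finset.mem_image_of_mem x' (Finset.mem_univ i))
          · exact fun i => Finset.mem_union_right _ (Finset.mem_image_of_mem y (Finset.mem_univ i))
        have hDx'y : Dd ((Finset.univ.image x') ∪ (Finset.univ.image y)) x' y < d := by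
          rw [← e2]
          calc Dd S x' y < Dd S x y := hlt'
            _ = d := by rw [e1, hd]
        have hpar'' : ∀ c, Odd (cnt x' c) ↔ Odd (cnt y c) := by
          intro c
          rw [hparx c, hpar c]
        have := ih _ hDx'y x' y rfl hpar''
        rw [hfx, this]

/-- cnt computation for the identification-minor vectors -/
private lemma cnt_pair (x : Fin (n + 2) → A) (a c : A) :
    cnt (fun k => if k = 0 ∨ k = 1 then a else x k) c =
      (if a = c then 2 else 0) + ∑ k : Fin n, (if x k.succ.succ = c then 1 else 0) := by
  rw [cnt_card_filter, Fin.sum_univ_succ, Fin.sum_univ_succ]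
  have h0 : ((0 : Fin (n + 2)) = 0 ∨ (0 : Fin (n + 2)) = 1) := Or.inl rfl
  have h1 : ((0 : Fin (n + 1)).succ = (0 : Fin (n+2)) ∨ (0 : Fin (n + 1)).succ = 1) := by
    right
    exact Fin.succ_zero_eq_one
  have h2 : ∀ k : Fin n, ¬ (k.succ.succ = (0 : Fin (n+2)) ∨ k.succ.succ = 1) := by
    intro k
    push_neg
    constructor
    · exact Fin.succ_ne_zero _
    · intro hc
      have : k.succ = 0 := by
        apply Fin.succ_injective
        rw [hc, Fin.succ_zero_eq_one]
      exact Fin.succ_ne_zero _ this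
  rw [if_pos h0, if_pos h1]
  have hrest : ∀ k : Fin n,
      (if (if k.succ.succ = (0:Fin (n+2)) ∨ k.succ.succ = 1 then a else x k.succ.succ) = c then 1 else 0)
        = (if x k.succ.succ = c then 1 else 0) := by
    intro k
    rw [if_neg (h2 k)]
  rw [Finset.sum_congr rfl (fun k _ => hrest k)]
  split <;> omega

end Main

/-- `f : A^n → B` is determined by `oddsupp` iff `f` is totally
symmetric and the identification minor `f(x₁,x₁,x₃,…,xₙ)` does not depend on `x₁`. -/
theorem determined_by_oddsupp_iff
    (A B : Type*) [DecidableEq A] [Nontrivial A] [Nontrivial B] (n : ℕ)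
    (f : (Fin (n + 2) → A) → B) :
    (∃ fstar : Set A → B, ∀ x : Fin (n + 2) → A,
        f x = fstar {c : A | Odd ((Finset.univ.filter (fun i => x i = c)).card)}) ↔
    ((∀ (π : Equiv.Perm (Fin (n + 2))) (x : Fin (n + 2) → A), f (x ∘ π) = f x) ∧
      (∀ (x : Fin (n + 2) → A) (a b : A),
        f (fun k => if k = 0 ∨ k = 1 then a else x k) =
        f (fun k => if k = 0 ∨ k = 1 then b else x k))) := by
  constructor
  · rintro ⟨g, hg⟩
    constructor
    · intro π x
      rw [hg, hg]
      congr 1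
      ext c
      simp only [Set.mem_setOf_eq]
      have := cnt_comp_equiv x π c
      unfold cnt at this
      rw [this]
    · intro x a b
      rw [hg, hg]
      congr 1
      ext c
      simp only [Set.mem_setOf_eq]
      have ha := cnt_pair (A := A) (n := n) x a c
      have hb := cnt_pair (A := A) (n := n) x b c
      unfold cnt at ha hb
      rw [ha, hb, Nat.odd_iff, Nat.odd_iff]
      constructor <;> intro h <;> revert h <;> split <;> split <;> omega
  · rintro ⟨hs, hm⟩
    classical
    refine ⟨fun S => if hS : ∃ z : Fin (n + 2) → A,
        {c : A | Odd ((Finset.univ.filter (fun i => z i = c)).card)} = S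
      then f hS.choose else f (fun _ => Classical.arbitrary A), fun x => ?_⟩
    have hx : ∃ z : Fin (n + 2) → A,
        {c : A | Odd ((Finset.univ.filter (fun i => z i = c)).card)} =
        {c : A | Odd ((Finset.univ.filter (fun i => x i = c)).card)} := ⟨x, rfl⟩
    have hchoose : f x = f hx.choose := by
      apply key hs hm
      intro c
      have hext := hx.choose_spec
      rw [Set.ext_iff] at hext
      have hc := hext c
      simp only [Set.mem_setOf_eq] at hc
      unfold cnt
      exact hc.symm
    rw [hchoose]
    beta_reduce
    rw [dif_pos hx]
end

section
/- Let A be a finite set with k ≥ 2 elements, identified with {0,1,...,k−1}, and let 2 ≤ n ≤ k. Define f : A^n → A by f(a) = 1 if a = (0, 1, ..., n−1) and f(a) = 0 otherwise. Then all n variables of f are essential, every identification minor f_{i←j} (i ≠ j) is identically 0, and hence the arity gap of f equals n. -/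
/-- An essential variable of a function of several variables. -/
def Essential {A B : Type*} {n : ℕ} (g : (Fin n → A) → B) (i : Fin n) : Prop :=
  ∃ (x : Fin n → A) (a : A), g (Function.update x i a) ≠ g x

/-- The essential arity: the number of essential variables. -/
noncomputable def essArity {A B : Type*} {n : ℕ} (g : (Fin n → A) → B) : ℕ :=
  Nat.card {i : Fin n // Essential g i}

/-- The identification minor `f_{i ← j}`, substituting `x_j` for `x_i`. -/
def idMinor {A B : Type*} {n : ℕ} (f : (Fin n → A) → B) (i j : Fin n) : (Fin n → A) → B :=
  fun x => f (Function.update x i (x j))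

/-- The arity gap of a function. -/
noncomputable def arityGap {A B : Type*} {n : ℕ} (f : (Fin n → A) → B) : ℕ :=
  sInf {d | ∃ i j : Fin n, i ≠ j ∧ Essential f i ∧ Essential f j ∧
    d = essArity f - essArity (idMinor f i j)}


/-- On `A = {0,…,k−1}` with `2 ≤ n ≤ k`, the indicator function of the
tuple `(0,1,…,n−1)` has all variables essential, all identification minors identically
`0`, and arity gap `n`. -/
theorem arityGap_indicator (k n : ℕ) (hk : 2 ≤ k) (hn : 2 ≤ n) (hnk : n ≤ k)
    (f : (Fin n → Fin k) → Fin k)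
    (hf : ∀ a : Fin n → Fin k,
      f a = if (∀ i : Fin n, (a i : ℕ) = (i : ℕ)) then
              (⟨1, by omega⟩ : Fin k) else ⟨0, by omega⟩) :
    (∀ i : Fin n, Essential f i) ∧
    (∀ i j : Fin n, i ≠ j → ∀ x, idMinor f i j x = ⟨0, by omega⟩) ∧
    arityGap f = n := by
  set x0 : Fin n → Fin k := fun i => ⟨(i : ℕ), lt_of_lt_of_le i.isLt hnk⟩ with hx0
  have hfx0 : f x0 = ⟨1, by omega⟩ := by
    rw [hf]; simp [hx0]
  have hess : ∀ i : Fin n, Essential f i := by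
    intro i
    obtain ⟨b, hb⟩ : ∃ b : Fin k, (b : ℕ) ≠ (i : ℕ) := by
      by_cases h : (i : ℕ) = 0
      · exact ⟨⟨1, by omega⟩, by simp [h]⟩
      · exact ⟨⟨0, by omega⟩, by simpa using Ne.symm h⟩
    refine ⟨x0, b, ?_⟩
    rw [hf, hfx0]
    rw [if_neg]
    · simp [Fin.ext_iff]
    · intro h
      have := h i
      rw [Function.update_self] at this
      exact hb this
  have hminor : ∀ i j : Fin n, i ≠ j → ∀ x, idMinor f i j x = ⟨0, by omega⟩ := by
    intro i j hij x
    unfold idMinor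
    rw [hf, if_neg]
    intro h
    have hi := h i
    have hj := h j
    rw [Function.update_self] at hi
    rw [Function.update_of_ne (Ne.symm hij)] at hj
    rw [hj] at hi
    exact hij (Fin.ext hi.symm)
  have hessAr : essArity f = n := by
    unfold essArity
    rw [Nat.card_congr (Equiv.subtypeUnivEquiv hess)]
    simp
  have hminorAr : ∀ i j : Fin n, i ≠ j → essArity (idMinor f i j) = 0 := by
    intro i j hij
    unfold essArity
    rw [Nat.card_eq_zero]
    left
    constructor
    rintro ⟨l, x, a, hne⟩
    exact hne (by rw [hminor i j hij, hminor i j hij])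
  refine ⟨hess, hminor, ?_⟩
  unfold arityGap
  have hset : {d | ∃ i j : Fin n, i ≠ j ∧ Essential f i ∧ Essential f j ∧
      d = essArity f - essArity (idMinor f i j)} = {n} := by
    ext d
    simp only [Set.mem_setOf_eq, Set.mem_singleton_iff]
    constructor
    · rintro ⟨i, j, hij, _, _, rfl⟩
      rw [hessAr, hminorAr i j hij]
      omega
    · rintro rfl
      refine ⟨⟨0, by omega⟩, ⟨1, by omega⟩, by simp [Fin.ext_iff], hess _, hess _, ?_⟩
      have h0 := hminorAr ⟨0, by omega⟩ ⟨1, by omega⟩ (by simp [Fin.ext_iff])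
      omega
  rw [hset, csInf_singleton]
end

section
/- Let (B, +) be a group with neutral element 0, let A be a set, and let f : A^n → B with n ≥ 3 and 1 ≤ p ≤ n. Then the following are equivalent: (i) f depends on all n variables and the quasi-arity of f equals n − p; (ii) there exist functions g, h : A^n → B with f = g + h, h vanishing on all tuples with a repeated coordinate, h not identically 0, and g having essential arity n − p. Moreover, such a decomposition is unique. -/
/-- The quasi-arity: the minimum essential arity among all supports of `f`, i.e.
functions agreeing with `f` on all tuples with a repeated coordinate. -/
noncomputable def quasiArity {A B : Type*} {n : ℕ} (f : (Fin n → A) → B) : ℕ :=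
  sInf {m | ∃ g : (Fin n → A) → B,
    (∀ x : Fin n → A, (∃ i j : Fin n, i ≠ j ∧ x i = x j) → g x = f x) ∧ essArity g = m}

section Aux

variable {A B : Type*} {n : ℕ}

lemma not_essential_iff (g : (Fin n → A) → B) (i : Fin n) :
    ¬ Essential g i ↔ ∀ (x : Fin n → A) (a : A), g (Function.update x i a) = g x := by
  simp [Essential]

lemma essArity_eq_of_forall (g : (Fin n → A) → B) (h : ∀ i, Essential g i) :
    essArity g = n := by
  unfold essArity
  rw [Nat.card_congr (Equiv.subtypeUnivEquiv h)]
  simp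

lemma exists_not_essential (g : (Fin n → A) → B) (h : essArity g ≠ n) :
    ∃ i, ∀ (x : Fin n → A) (a : A), g (Function.update x i a) = g x := by
  by_contra hc
  push_neg at hc
  refine h (essArity_eq_of_forall g fun i => ?_)
  obtain ⟨x, a, hxa⟩ := hc i
  exact ⟨x, a, hxa⟩

/-- Key lemma: two functions agreeing on diagonal tuples, each with an
inessential variable, are equal (needs `3 ≤ n`). -/
lemma eq_of_agree_on_diag (hn : 3 ≤ n) (g₁ g₂ : (Fin n → A) → B)
    (hd : ∀ x : Fin n → A, (∃ i j : Fin n, i ≠ j ∧ x i = x j) → g₁ x = g₂ x)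
    {i₁ i₂ : Fin n}
    (h₁ : ∀ (x : Fin n → A) (a : A), g₁ (Function.update x i₁ a) = g₁ x)
    (h₂ : ∀ (x : Fin n → A) (a : A), g₂ (Function.update x i₂ a) = g₂ x) :
    g₁ = g₂ := by
  funext x
  obtain ⟨k, hk1, hk2⟩ : ∃ k : Fin n, k ≠ i₁ ∧ k ≠ i₂ := by
    by_contra hc
    push_neg at hc
    have hsub : (Finset.univ : Finset (Fin n)) ⊆ {i₁, i₂} := by
      intro k _
      simp only [Finset.mem_insert, Finset.mem_singleton]
      by_cases h : k = i₁
      · exact Or.inl h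
      · exact Or.inr (hc k h)
    have h1 := Finset.card_le_card hsub
    have h2 : ({i₁, i₂} : Finset (Fin n)).card ≤ 2 :=
      (Finset.card_insert_le _ _).trans (by simp)
    simp [Finset.card_univ] at h1
    omega
  rcases eq_or_ne i₁ i₂ with heq | hne
  · -- same inessential variable
    subst heq
    have hu : Function.update x i₁ (x k) i₁ = Function.update x i₁ (x k) k := by
      simp [Function.update_of_ne hk1]
    calc g₁ x = g₁ (Function.update x i₁ (x k)) := (h₁ x (x k)).symm
      _ = g₂ (Function.update x i₁ (x k)) := hd _ ⟨i₁, k, Ne.symm hk1, hu⟩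
      _ = g₂ x := h₂ x (x k)
  · set u := Function.update x i₁ (x k) with hu_def
    set v := Function.update x i₂ (x k) with hv_def
    set z := Function.update u i₂ (x k) with hz_def
    have hukk : u k = x k := Function.update_of_ne hk1 _ _
    have hvkk : v k = x k := Function.update_of_ne hk2 _ _
    have hzkk : z k = x k := by
      rw [hz_def, Function.update_of_ne hk2, hukk]
    have hudiag : ∃ i j : Fin n, i ≠ j ∧ u i = u j :=
      ⟨i₁, k, Ne.symm hk1, by rw [hu_def, Function.update_self, Function.update_of_ne hk1]⟩
    have hvdiag : ∃ i j : Fin n, i ≠ j ∧ v i = v j :=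
      ⟨i₂, k, Ne.symm hk2, by rw [hv_def, Function.update_self, Function.update_of_ne hk2]⟩
    have hzdiag : ∃ i j : Fin n, i ≠ j ∧ z i = z j :=
      ⟨i₂, k, Ne.symm hk2, by
        rw [hz_def, Function.update_self, Function.update_of_ne hk2, hu_def,
          Function.update_of_ne hk1]⟩
    have hz' : z = Function.update v i₁ (x k) := by
      rw [hz_def, hu_def, hv_def, Function.update_comm hne]
    -- chain 1 : g₁ x = g₂ z
    have c1 : g₁ x = g₂ z := by
      calc g₁ x = g₁ u := (h₁ x (x k)).symm
        _ = g₂ u := hd u hudiag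
        _ = g₂ z := by rw [hz_def]; exact (h₂ u (x k)).symm
    -- chain 2 : g₂ x = g₂ z
    have c2 : g₂ x = g₂ z := by
      calc g₂ x = g₂ v := (h₂ x (x k)).symm
        _ = g₁ v := (hd v hvdiag).symm
        _ = g₁ z := by rw [hz']; exact (h₁ v (x k)).symm
        _ = g₂ z := hd z hzdiag
    rw [c1, c2]

end Aux

/-- For a group `B`, `f : A^n → B` (`n ≥ 3`, `1 ≤ p ≤ n`) depends on all
variables and has quasi-arity `n − p` iff `f = g + h` where `h` vanishes on tuples with
a repeated coordinate, `h ≢ 0`, and `ess g = n − p`; the decomposition is unique. -/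
theorem decomposition_by_quasiArity
    (A B : Type*) [Nontrivial A] [Nontrivial B] [AddGroup B]
    (n p : ℕ) (hn : 3 ≤ n) (hp1 : 1 ≤ p) (hpn : p ≤ n)
    (f : (Fin n → A) → B) :
    ((essArity f = n ∧ quasiArity f = n - p) ↔
      (∃ g h : (Fin n → A) → B,
        (∀ x, f x = g x + h x) ∧
        (∀ x : Fin n → A, (∃ i j : Fin n, i ≠ j ∧ x i = x j) → h x = 0) ∧
        (∃ x, h x ≠ 0) ∧
        essArity g = n - p)) ∧
    (∀ g₁ h₁ g₂ h₂ : (Fin n → A) → B,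
      (∀ x, f x = g₁ x + h₁ x) →
      (∀ x : Fin n → A, (∃ i j : Fin n, i ≠ j ∧ x i = x j) → h₁ x = 0) →
      (∃ x, h₁ x ≠ 0) → essArity g₁ = n - p →
      (∀ x, f x = g₂ x + h₂ x) →
      (∀ x : Fin n → A, (∃ i j : Fin n, i ≠ j ∧ x i = x j) → h₂ x = 0) →
      (∃ x, h₂ x ≠ 0) → essArity g₂ = n - p →
      g₁ = g₂ ∧ h₁ = h₂) := by
  have hnp : n - p ≠ n := by omega
  have hnplt : n - p < n := by omega
  constructor
  · constructor
    · rintro ⟨hef, hq⟩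
      -- the infimum is attained: get a support g with essArity g = n - p
      have hne : {m | ∃ g : (Fin n → A) → B,
          (∀ x : Fin n → A, (∃ i j : Fin n, i ≠ j ∧ x i = x j) → g x = f x) ∧
          essArity g = m}.Nonempty := ⟨essArity f, f, fun x _ => rfl, rfl⟩
      obtain ⟨g, hgd, hge⟩ := Nat.sInf_mem hne
      rw [show sInf _ = quasiArity f from rfl, hq] at hge
      refine ⟨g, fun x => -g x + f x, fun x => (add_neg_cancel_left _ _).symm,
        fun x hx => by show -g x + f x = 0; rw [hgd x hx, neg_add_cancel], ?_, hge⟩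
      by_contra hc
      push_neg at hc
      have : f = g := by
        funext x
        have := hc x
        have h1 : f x = g x + (-g x + f x) := (add_neg_cancel_left _ _).symm
        rw [this, add_zero] at h1
        exact h1
      rw [this, hge] at hef
      omega
    · rintro ⟨g, h, hf, hh0, ⟨x₀, hx₀⟩, hge⟩
      have hgd : ∀ x : Fin n → A, (∃ i j : Fin n, i ≠ j ∧ x i = x j) → g x = f x := by
        intro x hx
        rw [hf x, hh0 x hx, add_zero]
      obtain ⟨i₂, hi₂⟩ := exists_not_essential g (hge ▸ hnp)
      constructor
      · -- essArity f = n
        refine essArity_eq_of_forall f fun i => ?_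
        by_contra hci
        rw [not_essential_iff] at hci
        have hfg : f = g :=
          eq_of_agree_on_diag hn f g (fun x hx => (hgd x hx).symm) hci hi₂
        apply hx₀
        have := hf x₀
        rw [hfg] at this
        exact (add_eq_left).mp this.symm
      · -- quasiArity f = n - p
        have hmem : n - p ∈ {m | ∃ g' : (Fin n → A) → B,
            (∀ x : Fin n → A, (∃ i j : Fin n, i ≠ j ∧ x i = x j) → g' x = f x) ∧
            essArity g' = m} := ⟨g, hgd, hge⟩
        have hle : quasiArity f ≤ n - p := Nat.sInf_le hmem
        obtain ⟨g', hgd', hge'⟩ := Nat.sInf_mem ⟨n - p, hmem⟩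
        have hlt : essArity g' ≠ n := by
          rw [show sInf _ = quasiArity f from rfl] at hge'
          omega
        obtain ⟨i₁, hi₁⟩ := exists_not_essential g' hlt
        have : g' = g :=
          eq_of_agree_on_diag hn g' g
            (fun x hx => (hgd' x hx).trans (hgd x hx).symm) hi₁ hi₂
        rw [show sInf _ = quasiArity f from rfl, this, hge] at hge'
        exact hge'.symm
  · rintro g₁ h₁ g₂ h₂ hf₁ hd₁ _ he₁ hf₂ hd₂ _ he₂
    obtain ⟨j₁, hj₁⟩ := exists_not_essential g₁ (he₁ ▸ hnp)
    obtain ⟨j₂, hj₂⟩ := exists_not_essential g₂ (he₂ ▸ hnp)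
    have hgg : g₁ = g₂ := by
      refine eq_of_agree_on_diag hn g₁ g₂ (fun x hx => ?_) hj₁ hj₂
      have e1 : g₁ x = f x := by rw [hf₁ x, hd₁ x hx, add_zero]
      have e2 : g₂ x = f x := by rw [hf₂ x, hd₂ x hx, add_zero]
      rw [e1, e2]
    refine ⟨hgg, funext fun x => ?_⟩
    have := (hf₁ x).symm.trans (hf₂ x)
    rw [hgg] at this
    exact add_left_cancel this
end

section
/- Let F be a field of characteristic 0, n ≥ 3, and f ∈ F[x_1,...,x_n]. Suppose that for each pair of indices the identification minor f(x_1, x_1, x_3,...,x_n) does not depend on the identified variable (as holds when f is determined by oddsupp restricted to tuples with a repetition). Then for all a, b, x_4, ..., x_n ∈ F: f(a, a, a, x_4,...,x_n) = f(b, b, b, x_4,...,x_n). -/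
open MvPolynomial

lemma eval_aeval_poly {F : Type*} [CommSemiring F] {n : ℕ}
    (g : Fin n → Polynomial F) (f : MvPolynomial (Fin n) F) (t : F) :
    Polynomial.eval t (aeval g f) = eval (fun k => Polynomial.eval t (g k)) f := by
  induction f using MvPolynomial.induction_on with
  | C a => simp
  | add p q hp hq => simp [hp, hq]
  | mul_X p k hp => simp [hp]

lemma derivative_aeval_chain {F : Type*} [CommRing F] {n : ℕ}
    (g : Fin n → Polynomial F) (f : MvPolynomial (Fin n) F) :
    Polynomial.derivative (aeval g f) =
      ∑ k, aeval g (pderiv k f) * Polynomial.derivative (g k) := by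
  induction f using MvPolynomial.induction_on with
  | C a => simp
  | add p q hp hq => simp [hp, hq, add_mul, Finset.sum_add_distrib]
  | mul_X p k hp =>
    simp only [map_mul, aeval_X, Polynomial.derivative_mul, hp, pderiv_mul, map_add,
      add_mul, Finset.sum_add_distrib, pderiv_X, Pi.single_apply, apply_ite, map_one,
      map_zero, mul_one, mul_zero, ite_mul, zero_mul, Finset.sum_ite_eq,
      Finset.mem_univ, if_true, Finset.sum_mul]
    rw [Finset.sum_congr rfl (fun x _ => show
      (if k = x then (aeval g) ((pderiv x) p) * g k * Polynomial.derivative (g x) +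
          (aeval g) p * Polynomial.derivative (g x)
        else (aeval g) ((pderiv x) p) * g k * Polynomial.derivative (g x) + 0) =
      (aeval g) ((pderiv x) p) * g k * Polynomial.derivative (g x) +
        (if k = x then (aeval g) p * Polynomial.derivative (g x) else 0) by
          split <;> simp)]
    simp only [Finset.sum_add_distrib, Finset.sum_ite_eq, Finset.mem_univ, if_true]
    rw [add_left_inj]
    exact Finset.sum_congr rfl fun x _ => by ring

lemma pair_deriv {F : Type*} [Field F] [CharZero F] {n : ℕ}
    (f : MvPolynomial (Fin n) F)
    (hminor : ∀ i j : Fin n, i ≠ j → ∀ (x : Fin n → F) (a b : F),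
      eval (fun k => if k = i ∨ k = j then a else x k) f =
      eval (fun k => if k = i ∨ k = j then b else x k) f)
    (i j : Fin n) (hij : i ≠ j) (y : Fin n → F) (hy : y i = y j) :
    eval y (pderiv i f) + eval y (pderiv j f) = 0 := by
  classical
  set τ : Fin n → Polynomial F :=
    fun k => if k = i ∨ k = j then Polynomial.X else Polynomial.C (y k) with hτ
  have hev : ∀ t : F, Polynomial.eval t (aeval τ f) =
      eval (fun k => if k = i ∨ k = j then t else y k) f := by
    intro t
    rw [eval_aeval_poly]
    have : (fun k => Polynomial.eval t (τ k)) =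
        (fun k => if k = i ∨ k = j then t else y k) := by
      funext k; by_cases h : k = i ∨ k = j <;> simp [hτ, h]
    rw [this]
  have hconst : aeval τ f = Polynomial.C (Polynomial.eval 0 (aeval τ f)) := by
    apply Polynomial.funext
    intro r
    rw [Polynomial.eval_C, hev r, hev 0]
    exact hminor i j hij y r 0
  have hder : Polynomial.derivative (aeval τ f) = 0 := by
    rw [hconst]; simp
  rw [derivative_aeval_chain] at hder
  have hτd : ∀ k, Polynomial.derivative (τ k) =
      if k ∈ ({i, j} : Finset (Fin n)) then 1 else 0 := by
    intro k
    by_cases h : k = i ∨ k = j <;>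
      simp [hτ, h, Finset.mem_insert, Finset.mem_singleton]
  simp only [hτd, mul_ite, mul_one, mul_zero] at hder
  rw [Finset.sum_ite_mem, Finset.univ_inter, Finset.sum_pair hij] at hder
  have := congrArg (Polynomial.eval (y i)) hder
  rw [Polynomial.eval_add, Polynomial.eval_zero, eval_aeval_poly, eval_aeval_poly] at this
  have hpt : (fun k => Polynomial.eval (y i) (τ k)) = y := by
    funext k
    by_cases h : k = i ∨ k = j
    · rcases h with rfl | rfl <;> simp [hτ, hy]
    · simp [hτ, h]
  rwa [hpt] at this

/-- Over a field of characteristic `0` (`n ≥ 3`), if for each pair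
`i ≠ j` the identification minor of `f` obtained by identifying `x_i` with `x_j` does
not depend on the identified variable, then the value of `f` does not change when three
identified entries are replaced by another common value. -/
theorem triple_replacement
    (F : Type*) [Field F] [CharZero F] (n : ℕ) (hn : 3 ≤ n)
    (f : MvPolynomial (Fin n) F)
    (hminor : ∀ i j : Fin n, i ≠ j → ∀ (x : Fin n → F) (a b : F),
      eval (fun k => if k = i ∨ k = j then a else x k) f =
      eval (fun k => if k = i ∨ k = j then b else x k) f) :
    ∀ (x : Fin n → F) (a b : F),
      eval (fun k : Fin n => if (k : ℕ) < 3 then a else x k) f =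
      eval (fun k : Fin n => if (k : ℕ) < 3 then b else x k) f := by
  classical
  intro x a b
  set σp : Fin n → Polynomial F :=
    fun k => if (k : ℕ) < 3 then Polynomial.X else Polynomial.C (x k) with hσ
  have hev : ∀ t : F, Polynomial.eval t (aeval σp f) =
      eval (fun k : Fin n => if (k : ℕ) < 3 then t else x k) f := by
    intro t
    rw [eval_aeval_poly]
    have : (fun k => Polynomial.eval t (σp k)) =
        (fun k : Fin n => if (k : ℕ) < 3 then t else x k) := by
      funext k; by_cases h : (k : ℕ) < 3 <;> simp [hσ, h]
    rw [this]
  rw [← hev a, ← hev b]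
  suffices h : Polynomial.derivative (aeval σp f) = 0 by
    rw [Polynomial.eq_C_of_derivative_eq_zero h]; simp
  set i0 : Fin n := ⟨0, by omega⟩
  set i1 : Fin n := ⟨1, by omega⟩
  set i2 : Fin n := ⟨2, by omega⟩
  have h01 : i0 ≠ i1 := by simp [i0, i1, Fin.ext_iff]
  have h02 : i0 ≠ i2 := by simp [i0, i2, Fin.ext_iff]
  have h12 : i1 ≠ i2 := by simp [i1, i2, Fin.ext_iff]
  rw [derivative_aeval_chain]
  have hσd : ∀ k : Fin n, Polynomial.derivative (σp k) =
      if k ∈ ({i0, i1, i2} : Finset (Fin n)) then 1 else 0 := by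
    intro k
    have hmem : k ∈ ({i0, i1, i2} : Finset (Fin n)) ↔ (k : ℕ) < 3 := by
      simp only [Finset.mem_insert, Finset.mem_singleton, Fin.ext_iff, i0, i1, i2]
      omega
    by_cases h : (k : ℕ) < 3 <;> simp [hσ, h, hmem]
  simp only [hσd, mul_ite, mul_one, mul_zero]
  rw [Finset.sum_ite_mem, Finset.univ_inter,
    Finset.sum_insert (by simp [h01, h02]), Finset.sum_pair h12]
  apply Polynomial.funext
  intro t
  simp only [Polynomial.eval_add, Polynomial.eval_zero, eval_aeval_poly]
  set yt : Fin n → F := fun k : Fin n => if (k : ℕ) < 3 then t else x k with hyt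
  have harg : (fun k => Polynomial.eval t (σp k)) = yt := by
    funext k; by_cases h : (k : ℕ) < 3 <;> simp [hσ, hyt, h]
  have hfun : ∀ q : MvPolynomial (Fin n) F,
      eval (fun k => Polynomial.eval t (σp k)) q = eval yt q := by
    intro q; rw [harg]
  rw [hfun, hfun, hfun]
  have hy0 : yt i0 = t := by simp [hyt, i0]
  have hy1 : yt i1 = t := by simp [hyt, i1]
  have hy2 : yt i2 = t := by simp [hyt, i2]
  have e01 := pair_deriv f hminor i0 i1 h01 yt (by rw [hy0, hy1])
  have e02 := pair_deriv f hminor i0 i2 h02 yt (by rw [hy0, hy2])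
  have e12 := pair_deriv f hminor i1 i2 h12 yt (by rw [hy1, hy2])
  linear_combination (e01 + e02 + e12) / 2
end

section
/- Let F = GF(q) with q a power of 2 and n ≥ 1. The F-vector space of functions f : F^n → F that are determined by oddsupp has dimension equal to |P'_n(F)|, where P'_n(F) = {S ⊆ F : |S| ∈ {n, n−2, n−4, ...}}; explicitly, the dimension is 2^{q−1} if n ≥ q, and ∑_{j ≥ 0} C(q, n−2j) if n < q. -/
set_option maxHeartbeats 1000000


/-- The space of functions `F^n → F` determined by `oddsupp`. -/
def oddsuppSpace (F : Type*) [Field F] [Fintype F] [DecidableEq F] (n : ℕ) :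
    Submodule F ((Fin n → F) → F) where
  carrier := {f | ∃ fs : Set F → F, ∀ x : Fin n → F,
    f x = fs {c : F | Odd ((Finset.univ.filter (fun i => x i = c)).card)}}
  add_mem' := by
    rintro a b ⟨fa, hfa⟩ ⟨fb, hfb⟩
    exact ⟨fa + fb, fun x => by simp [hfa x, hfb x]⟩
  zero_mem' := ⟨0, fun x => rfl⟩
  smul_mem' := by
    rintro c a ⟨fa, hfa⟩
    exact ⟨c • fa, fun x => by simp [hfa x]⟩

section Aux

variable {F : Type*} [Field F] [Fintype F] [DecidableEq F] {n : ℕ}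

/-- The odd support as a finset. -/
def osupp (x : Fin n → F) : Finset F :=
  Finset.univ.filter fun c => Odd ((Finset.univ.filter fun i => x i = c).card)

lemma sum_count_eq (x : Fin n → F) :
    ∑ c : F, (Finset.univ.filter fun i => x i = c).card = n := by
  have := Finset.card_eq_sum_card_fiberwise
    (f := x) (s := (Finset.univ : Finset (Fin n))) (t := Finset.univ)
    (fun i _ => Finset.mem_univ (x i))
  simpa using this.symm

lemma osupp_card_le (x : Fin n → F) : (osupp x).card ≤ n := by
  have h1 : (osupp x).card = ∑ c ∈ osupp x, 1 := by simp
  have h2 : ∑ c ∈ osupp x, 1 ≤ ∑ c ∈ osupp x, (Finset.univ.filter fun i => x i = c).card := by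
    refine Finset.sum_le_sum fun c hc => ?_
    have : Odd ((Finset.univ.filter fun i => x i = c).card) := by
      simpa [osupp] using hc
    exact this.pos
  have h3 : ∑ c ∈ osupp x, (Finset.univ.filter fun i => x i = c).card
      ≤ ∑ c : F, (Finset.univ.filter fun i => x i = c).card :=
    Finset.sum_le_sum_of_subset (Finset.subset_univ _)
  have h4 := sum_count_eq x
  omega

lemma osupp_card_mod (x : Fin n → F) : (osupp x).card % 2 = n % 2 := by
  have hsum := sum_count_eq x
  have h1 : n % 2 = (∑ c : F, (Finset.univ.filter fun i => x i = c).card) % 2 := by rw [hsum]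
  rw [h1, Finset.sum_nat_mod]
  have h2 : ∀ c : F, (Finset.univ.filter fun i => x i = c).card % 2
      = if Odd ((Finset.univ.filter fun i => x i = c).card) then 1 else 0 := by
    intro c
    rcases Nat.even_or_odd ((Finset.univ.filter fun i => x i = c).card) with h | h
    · simp [h, Nat.even_iff.1 h, Nat.not_odd_iff_even.2 h]
    · simp [h, Nat.odd_iff.1 h]
  rw [Finset.sum_congr rfl fun c _ => h2 c]
  rw [← Finset.card_filter]
  simp [osupp]

lemma osupp_parity (x : Fin n → F) : (n - (osupp x).card) % 2 = 0 := by
  have h1 := osupp_card_le x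
  have h2 := osupp_card_mod x
  omega

lemma exists_osupp_eq (S : Finset F) (h1 : S.card ≤ n) (h2 : (n - S.card) % 2 = 0) :
    ∃ x : Fin n → F, osupp x = S := by
  set L : List F := S.toList ++ List.replicate (n - S.card) 0 with hLdef
  have hlen : L.length = n := by
    simp only [hLdef, List.length_append, Finset.length_toList, List.length_replicate]
    omega
  let v : List.Vector F n := ⟨L, hlen⟩
  refine ⟨fun i => List.Vector.get v i, ?_⟩
  ext c
  simp only [osupp, Finset.mem_filter, Finset.mem_univ, true_and]
  rw [Fin.card_filter_univ_eq_vector_get_eq_count c v]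
  have hvl : List.Vector.toList v = L := rfl
  rw [hvl, hLdef, List.count_append]
  have hcount : S.toList.count c = if c ∈ S then 1 else 0 := by
    split_ifs with h
    · exact List.count_eq_one_of_mem S.nodup_toList (Finset.mem_toList.2 h)
    · exact List.count_eq_zero.2 fun hc => h (Finset.mem_toList.1 hc)
  have hrep : (List.replicate (n - S.card) (0 : F)).count c
      = if 0 = c then n - S.card else 0 := by
    simp [List.count_replicate]
  rw [hcount, hrep, Nat.odd_iff]
  split_ifs with hmem hc hc <;>
    first
      | exact iff_of_true (by omega) hmem
      | exact iff_of_false (by omega) hmem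
      | exact iff_of_false (fun hfalse => hfalse) hmem

end Aux

/-- For `F = GF(q)` (`q` a power of `2`) and `n ≥ 1`, the dimension of
the space of functions `F^n → F` determined by `oddsupp` equals `|P'_n(F)|`, the number
of subsets of `F` whose cardinality lies in `{n, n − 2, n − 4, …}`; explicitly it is
`2^{q−1}` if `n ≥ q` and `∑_j C(q, n − 2j)` if `n < q`. -/
theorem finrank_oddsuppSpace
    (F : Type*) [Field F] [Fintype F] [DecidableEq F] (q n : ℕ)
    (hq : Fintype.card F = q) (hq2 : ∃ k : ℕ, 0 < k ∧ q = 2 ^ k) (hn : 1 ≤ n) :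
    Module.finrank F (oddsuppSpace F n) =
      Fintype.card {S : Finset F // S.card ≤ n ∧ (n - S.card) % 2 = 0} ∧
    Module.finrank F (oddsuppSpace F n) =
      (if q ≤ n then 2 ^ (q - 1)
       else ∑ j ∈ Finset.range (n / 2 + 1), q.choose (n - 2 * j)) := by
  classical
  set P : Finset F → Prop := fun S => S.card ≤ n ∧ (n - S.card) % 2 = 0 with hP
  -- chosen preimages
  have hex : ∀ S : {S : Finset F // P S}, ∃ x : Fin n → F, osupp x = S.1 :=
    fun S => exists_osupp_eq S.1 S.2.1 S.2.2
  choose xS hxS using hex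
  -- the set-of equals the coercion of osupp
  have hset : ∀ y : Fin n → F,
      {c : F | Odd ((Finset.univ.filter (fun i => y i = c)).card)} = ↑(osupp y) := by
    intro y; ext c; simp [osupp]
  -- the evaluation linear map
  let Φ : (oddsuppSpace F n) →ₗ[F] ({S : Finset F // P S} → F) :=
    { toFun := fun f S => f.1 (xS S)
      map_add' := fun f g => rfl
      map_smul' := fun c f => rfl }
  have hinj : Function.Injective Φ := by
    intro f g hfg
    have hfg' : ∀ S, f.1 (xS S) = g.1 (xS S) := fun S => congrFun hfg S
    apply Subtype.ext
    funext x
    obtain ⟨fs, hfs⟩ := f.2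
    obtain ⟨gs, hgs⟩ := g.2
    have hS : P (osupp x) := ⟨osupp_card_le x, osupp_parity x⟩
    have hx' : osupp (xS ⟨osupp x, hS⟩) = osupp x := hxS ⟨osupp x, hS⟩
    calc f.1 x = fs ↑(osupp x) := by rw [hfs x, hset x]
      _ = fs ↑(osupp (xS ⟨osupp x, hS⟩)) := by rw [hx']
      _ = f.1 (xS ⟨osupp x, hS⟩) := by rw [hfs (xS ⟨osupp x, hS⟩), hset]
      _ = g.1 (xS ⟨osupp x, hS⟩) := hfg' _
      _ = gs ↑(osupp (xS ⟨osupp x, hS⟩)) := by rw [hgs (xS ⟨osupp x, hS⟩), hset]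
      _ = gs ↑(osupp x) := by rw [hx']
      _ = g.1 x := by rw [hgs x, hset x]
  have hsurj : Function.Surjective Φ := by
    intro h
    set g : Finset F → F := fun S => if hS : P S then h ⟨S, hS⟩ else 0 with hg
    have hmem : (fun x : Fin n → F => g (osupp x)) ∈ oddsuppSpace F n := by
      refine ⟨fun s => g (Finset.univ.filter fun c => c ∈ s), fun x => ?_⟩
      refine congrArg g ?_
      ext c
      simp [osupp]
    refine ⟨⟨fun x => g (osupp x), hmem⟩, ?_⟩
    funext S
    show g (osupp (xS S)) = h S
    rw [hxS S, hg]
    exact dif_pos S.2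
  -- the linear equivalence and the rank
  have hrank : Module.finrank F (oddsuppSpace F n)
      = Fintype.card {S : Finset F // P S} := by
    rw [(LinearEquiv.ofBijective Φ ⟨hinj, hsurj⟩).finrank_eq]
    exact Module.finrank_pi F
  refine ⟨hrank, hrank.trans ?_⟩
  rw [Fintype.card_subtype]
  by_cases hqn : q ≤ n
  · rw [if_pos hqn]
    -- the condition reduces to a parity condition
    have hcong : Finset.univ.filter P
        = Finset.univ.filter fun S : Finset F => S.card % 2 = n % 2 := by
      refine Finset.filter_congr fun S _ => ?_
      have hcard : S.card ≤ q := hq ▸ Finset.card_le_univ S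
      constructor
      · intro hPS; omega
      · intro hpar; constructor <;> omega
    rw [hcong]
    -- parity classes have equal size via the involution of toggling `0`
    have hbij : (Finset.univ.filter fun S : Finset F => S.card % 2 = n % 2).card
        = (Finset.univ.filter fun S : Finset F => ¬ S.card % 2 = n % 2).card := by
      refine Finset.card_bij'
        (fun S _ => if (0 : F) ∈ S then S.erase 0 else insert 0 S)
        (fun S _ => if (0 : F) ∈ S then S.erase 0 else insert 0 S) ?_ ?_ ?_ ?_
      · intro S hS
        simp only [Finset.mem_filter, Finset.mem_univ, true_and] at hS ⊢
        split_ifs with h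
        · have h1 : 1 ≤ S.card := Finset.card_pos.2 ⟨0, h⟩
          rw [Finset.card_erase_of_mem h]; omega
        · rw [Finset.card_insert_of_notMem h]; omega
      · intro S hS
        simp only [Finset.mem_filter, Finset.mem_univ, true_and] at hS ⊢
        split_ifs with h
        · have h1 : 1 ≤ S.card := Finset.card_pos.2 ⟨0, h⟩
          rw [Finset.card_erase_of_mem h]; omega
        · rw [Finset.card_insert_of_notMem h]; omega
      · intro S _
        by_cases h : (0 : F) ∈ S
        · rw [if_pos h, if_neg (Finset.notMem_erase 0 S), Finset.insert_erase h]
        · rw [if_neg h, if_pos (Finset.mem_insert_self 0 S), Finset.erase_insert h]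
      · intro S _
        by_cases h : (0 : F) ∈ S
        · rw [if_pos h, if_neg (Finset.notMem_erase 0 S), Finset.insert_erase h]
        · rw [if_neg h, if_pos (Finset.mem_insert_self 0 S), Finset.erase_insert h]
    have htot := Finset.card_filter_add_card_filter_not
      (s := (Finset.univ : Finset (Finset F)))
      (fun S : Finset F => S.card % 2 = n % 2)
    rw [Finset.card_univ, Fintype.card_finset, hq] at htot
    have hq1 : 1 ≤ q := by
      obtain ⟨k, hk, rfl⟩ := hq2
      exact Nat.one_le_two_pow
    have hpow : 2 ^ q = 2 ^ (q - 1) * 2 := by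
      rw [← pow_succ]
      congr 1
      omega
    omega
  · rw [if_neg hqn]
    push_neg at hqn
    have hfib := Finset.card_eq_sum_card_fiberwise
      (f := fun S : Finset F => (n - S.card) / 2)
      (s := Finset.univ.filter P) (t := Finset.range (n / 2 + 1)) ?_
    · rw [hfib]
      refine Finset.sum_congr rfl fun j hj => ?_
      have hj' : j ≤ n / 2 := by
        rw [Finset.mem_range] at hj; omega
      have hfilter : ((Finset.univ.filter P).filter
            fun S : Finset F => (n - S.card) / 2 = j)
          = Finset.univ.filter fun S : Finset F => S.card = n - 2 * j := by
        rw [Finset.filter_filter]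
        refine Finset.filter_congr fun S _ => ?_
        constructor
        · rintro ⟨⟨h1, h2⟩, h3⟩
          have h3' : (n - S.card) / 2 = j := h3
          omega
        · intro h
          exact ⟨⟨by omega, by omega⟩, show (n - S.card) / 2 = j by omega⟩
      rw [hfilter, ← Finset.powerset_univ, ← Finset.powersetCard_eq_filter,
        Finset.card_powersetCard, Finset.card_univ, hq]
    · intro S hS
      rw [Finset.mem_coe, Finset.mem_filter] at hS
      rw [Finset.mem_coe, Finset.mem_range]
      show (n - S.card) / 2 < n / 2 + 1
      have := hS.2.1
      omega
end
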